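/- arXiv:1410.8807 — 3 statements merged into one kernel-verified Lean document; each statement's English description precedes it below -/
import Mathlib

section
/- Let G' be obtained from G by an edge splitting: e = xy is an edge contained in exactly one triangle xyz, while xz and zy each belong to more than one triangle; replace e by the path x–w–y through a new vertex w and add the edge wz. Then T(G') is a cycle if and only if T(G) is a cycle, and moreover T(G) ≅ C_n if and only if T(G') ≅ C_{n+1}. -/
open SimpleGraph

/-- A triangle in a graph: a 3-element vertex set, pairwise adjacent. -/
def IsTriangle {V : Type*} (G : SimpleGraph V) (t : Finset V) : Prop :=
  t.card = 3 ∧ ∀ u ∈ t, ∀ v ∈ t, u ≠ v → G.Adj u v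

/-- The triangle graph: vertices are the triangles of `G`, two triangles are
adjacent iff they share an edge (equivalently, share exactly two vertices). -/
def triangleGraph {V : Type*} [DecidableEq V] (G : SimpleGraph V) :
    SimpleGraph {t : Finset V // IsTriangle G t} where
  Adj s t := s ≠ t ∧ ((s : Finset V) ∩ (t : Finset V)).card = 2
  symm := by
    constructor
    intro s t h
    exact ⟨h.1.symm, by rw [Finset.inter_comm]; exact h.2⟩
  loopless := ⟨fun s h => h.1 rfl⟩

/-- `K₅` minus the edges of a triangle (on vertices 0,1,2). -/
def K5mK3 : SimpleGraph (Fin 5) where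
  Adj u v := u ≠ v ∧ ¬(u.val < 3 ∧ v.val < 3)
  symm := by
    constructor
    intro u v h
    exact ⟨h.1.symm, fun hc => h.2 ⟨hc.2, hc.1⟩⟩
  loopless := ⟨fun u h => h.1 rfl⟩

/-- The wheel `Wₙ = K₁ ∨ Cₙ`; the hub is `none`. -/
def wheel (n : ℕ) : SimpleGraph (Option (Fin n)) :=
  SimpleGraph.fromRel (fun u v =>
    u = none ∨ ∃ a b, u = some a ∧ v = some b ∧ (cycleGraph n).Adj a b)

/-- The square of a graph: join vertices at distance at most 2. -/
def squareGraph {V : Type*} (G : SimpleGraph V) : SimpleGraph V where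
  Adj u v := u ≠ v ∧ (G.Adj u v ∨ ∃ w, G.Adj u w ∧ G.Adj w v)
  symm := by
    constructor
    intro u v h
    refine ⟨h.1.symm, ?_⟩
    rcases h.2 with h' | ⟨w, h1, h2⟩
    · exact Or.inl h'.symm
    · exact Or.inr ⟨w, h2.symm, h1.symm⟩
  loopless := ⟨fun u h => h.1 rfl⟩

/-- The number of triangles of `G` containing both `u` and `v`. -/
noncomputable def triCount {V : Type*} (G : SimpleGraph V) (u v : V) : ℕ :=
  {t : Finset V | IsTriangle G t ∧ u ∈ t ∧ v ∈ t}.ncard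

/-- `G` contains a (not necessarily induced) subgraph isomorphic to `H`. -/
def HasSubgraphIso {α V : Type*} (H : SimpleGraph α) (G : SimpleGraph V) : Prop :=
  ∃ f : H →g G, Function.Injective f

/-- The graph obtained from `G` by splitting the edge `xy` (belonging to the unique
triangle `xyz`): replace `xy` by the path `x–w–y` through a new vertex `w = none`
and add the edge `wz`. -/
def splitGraph {V : Type*} (G : SimpleGraph V) (x y z : V) : SimpleGraph (Option V) :=
  SimpleGraph.fromRel (fun u v =>
    (∃ a b, u = some a ∧ v = some b ∧ G.Adj a b ∧ ¬(a = x ∧ b = y) ∧ ¬(a = y ∧ b = x)) ∨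
    (u = none ∧ (v = some x ∨ v = some y ∨ v = some z)))

set_option linter.unusedSectionVars false
set_option linter.unusedVariables false
namespace ESplit

/-! ### cycle graph helpers -/

lemma modsucc (a k : ℕ) (h : a < k+2) : (1 + a) % (k+2) = if a = k+1 then 0 else a+1 := by
  split
  · subst ‹a = k+1›; rw [show 1+(k+1) = k+2 by omega, Nat.mod_self]
  · rw [Nat.mod_eq_of_lt (by omega)]; omega

lemma cycAdj {k : ℕ} {u v : Fin (k+2)} :
    (cycleGraph (k+2)).Adj u v ↔
      (u.val + 1 = v.val ∨ v.val + 1 = u.val ∨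
        (u.val = 0 ∧ v.val = k+1) ∨ (v.val = 0 ∧ u.val = k+1)) := by
  have h1 : ∀ a b : Fin (k+2), a - b = 1 ↔ (a:ℕ) = (1 + (b:ℕ)) % (k+2) := by
    intro a b
    rw [sub_eq_iff_eq_add, Fin.ext_iff, Fin.add_def, Fin.val_one]
  rw [cycleGraph_adj, h1, h1, modsucc _ _ v.isLt, modsucc _ _ u.isLt]
  have := u.isLt; have := v.isLt
  split_ifs <;> omega

def rotIso {k : ℕ} (d : Fin (k+2)) : cycleGraph (k+2) ≃g cycleGraph (k+2) where
  toEquiv := Equiv.addRight d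
  map_rel_iff' := by
    intro a b
    simp only [Equiv.coe_addRight]
    rw [cycleGraph_adj, cycleGraph_adj, add_sub_add_right_eq_sub, add_sub_add_right_eq_sub]

def negIso {k : ℕ} : cycleGraph (k+2) ≃g cycleGraph (k+2) where
  toEquiv := Equiv.neg (Fin (k+2))
  map_rel_iff' := by
    intro a b
    simp only [Equiv.neg_apply]
    rw [cycleGraph_adj, cycleGraph_adj, neg_sub_neg, neg_sub_neg]
    exact or_comm

/-! ### basic graph lemmas -/

variable {V : Type*} [DecidableEq V]

lemma triangleGraph_adj (G : SimpleGraph V) (s t : {t : Finset V // IsTriangle G t}) :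
    (triangleGraph G).Adj s t ↔ s ≠ t ∧ ((s : Finset V) ∩ (t : Finset V)).card = 2 := Iff.rfl

lemma split_adj_some {G : SimpleGraph V} {x y z a b : V} :
    (splitGraph G x y z).Adj (some a) (some b) ↔
      G.Adj a b ∧ ¬(a = x ∧ b = y) ∧ ¬(a = y ∧ b = x) := by
  rw [splitGraph, fromRel_adj]
  constructor
  · rintro ⟨hne, h | h⟩
    · rcases h with ⟨a', b', ha', hb', h1, h2, h3⟩ | ⟨h, -⟩
      · obtain rfl : a = a' := Option.some.inj ha'
        obtain rfl : b = b' := Option.some.inj hb'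
        exact ⟨h1, h2, h3⟩
      · exact absurd h (by simp)
    · rcases h with ⟨a', b', ha', hb', h1, h2, h3⟩ | ⟨h, -⟩
      · obtain rfl : b = a' := Option.some.inj ha'
        obtain rfl : a = b' := Option.some.inj hb'
        exact ⟨h1.symm, fun hc => h3 ⟨hc.2, hc.1⟩, fun hc => h2 ⟨hc.2, hc.1⟩⟩
      · exact absurd h (by simp)
  · rintro ⟨h1, h2, h3⟩
    exact ⟨by simpa using h1.ne, Or.inl (Or.inl ⟨a, b, rfl, rfl, h1, h2, h3⟩)⟩

lemma split_adj_none {G : SimpleGraph V} {x y z a : V} :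
    (splitGraph G x y z).Adj none (some a) ↔ (a = x ∨ a = y ∨ a = z) := by
  rw [splitGraph, fromRel_adj]
  constructor
  · rintro ⟨-, h | h⟩
    · rcases h with ⟨a', b', ha', -, -⟩ | ⟨-, h⟩
      · exact absurd ha' (by simp)
      · rcases h with h|h|h
        · exact Or.inl (Option.some.inj h)
        · exact Or.inr (Or.inl (Option.some.inj h))
        · exact Or.inr (Or.inr (Option.some.inj h))
    · rcases h with ⟨a', b', -, hb', -⟩ | ⟨h, -⟩
      · exact absurd hb' (by simp)
      · exact absurd h (by simp)
  · intro h
    refine ⟨by simp, Or.inl (Or.inr ⟨rfl, ?_⟩)⟩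
    rcases h with rfl|rfl|rfl
    · exact Or.inl rfl
    · exact Or.inr (Or.inl rfl)
    · exact Or.inr (Or.inr rfl)

lemma distinct3 {x y z : V} (h : ({x,y,z} : Finset V).card = 3) : x ≠ y ∧ x ≠ z ∧ y ≠ z := by
  refine ⟨?_, ?_, ?_⟩ <;> rintro rfl
  · have he : ({x,x,z} : Finset V) = {x, z} := by ext a; simp
    rw [he] at h
    have := Finset.card_insert_le x ({z} : Finset V); simp at this; omega
  · have he : ({x,y,x} : Finset V) = {x, y} := by ext a; simp; tauto
    rw [he] at h
    have := Finset.card_insert_le x ({y} : Finset V); simp at this; omega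
  · have he : ({x,y,y} : Finset V) = {x, y} := by ext a; simp
    rw [he] at h
    have := Finset.card_insert_le x ({y} : Finset V); simp at this; omega

lemma pair_inter_card {x z : V} (hxz : x ≠ z) (t : Finset V) :
    (({x,z} : Finset V) ∩ t).card = 2 ↔ x ∈ t ∧ z ∈ t := by
  constructor
  · intro h
    have heq : ({x,z} : Finset V) ∩ t = {x,z} :=
      Finset.eq_of_subset_of_card_le Finset.inter_subset_left
        (by rw [h, Finset.card_pair hxz])
    rw [Finset.inter_eq_left] at heq
    exact ⟨heq (by simp), heq (by simp)⟩
  · rintro ⟨h1, h2⟩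
    have heq : ({x,z} : Finset V) ∩ t = {x,z} := by
      rw [Finset.inter_eq_left]
      intro a ha
      rcases Finset.mem_insert.mp ha with rfl | ha
      · exact h1
      · rw [Finset.mem_singleton] at ha; subst ha; exact h2
    rw [heq, Finset.card_pair hxz]

set_option linter.unusedSectionVars false

/-! ### triangles of the split graph -/

variable {G : SimpleGraph V} {x y z : V}

lemma isTriangle_A (hxy : x ≠ y) (hxz : x ≠ z) (hyz : y ≠ z) (haxz : G.Adj x z) :
    IsTriangle (splitGraph G x y z) {none, some x, some z} := by
  constructor
  · exact Finset.card_eq_three.mpr ⟨none, some x, some z, by simp, by simp, by simp [hxz], rfl⟩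
  · intro u hu v hv huv
    simp only [Finset.mem_insert, Finset.mem_singleton] at hu hv
    rcases hu with rfl|rfl|rfl <;> rcases hv with rfl|rfl|rfl
    · exact absurd rfl huv
    · exact split_adj_none.mpr (Or.inl rfl)
    · exact split_adj_none.mpr (Or.inr (Or.inr rfl))
    · exact ((splitGraph G x y z).adj_symm (split_adj_none.mpr (Or.inl rfl)))
    · exact absurd rfl huv
    · exact split_adj_some.mpr ⟨haxz, fun hc => hyz hc.2.symm, fun hc => hxy hc.1⟩
    · exact ((splitGraph G x y z).adj_symm (split_adj_none.mpr (Or.inr (Or.inr rfl))))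
    · exact split_adj_some.mpr ⟨haxz.symm, fun hc => hxz hc.1.symm, fun hc => hyz hc.1.symm⟩
    · exact absurd rfl huv

lemma isTriangle_B (hxy : x ≠ y) (hxz : x ≠ z) (hyz : y ≠ z) (hayz : G.Adj y z) :
    IsTriangle (splitGraph G x y z) {none, some y, some z} := by
  constructor
  · exact Finset.card_eq_three.mpr ⟨none, some y, some z, by simp, by simp, by simp [hyz], rfl⟩
  · intro u hu v hv huv
    simp only [Finset.mem_insert, Finset.mem_singleton] at hu hv
    rcases hu with rfl|rfl|rfl <;> rcases hv with rfl|rfl|rfl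
    · exact absurd rfl huv
    · exact split_adj_none.mpr (Or.inr (Or.inl rfl))
    · exact split_adj_none.mpr (Or.inr (Or.inr rfl))
    · exact ((splitGraph G x y z).adj_symm (split_adj_none.mpr (Or.inr (Or.inl rfl))))
    · exact absurd rfl huv
    · exact split_adj_some.mpr ⟨hayz, fun hc => hxy hc.1.symm, fun hc => hxz hc.2.symm⟩
    · exact ((splitGraph G x y z).adj_symm (split_adj_none.mpr (Or.inr (Or.inr rfl))))
    · exact split_adj_some.mpr ⟨hayz.symm, fun hc => hxz hc.1.symm, fun hc => hyz hc.1.symm⟩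
    · exact absurd rfl huv

lemma isTriangle_image {t : Finset V} (ht : IsTriangle G t) (hnxy : ¬(x ∈ t ∧ y ∈ t)) :
    IsTriangle (splitGraph G x y z) (t.image some) := by
  constructor
  · rw [Finset.card_image_of_injective _ (Option.some_injective V), ht.1]
  · intro u hu v hv huv
    obtain ⟨a, ha, rfl⟩ := Finset.mem_image.mp hu
    obtain ⟨b, hb, rfl⟩ := Finset.mem_image.mp hv
    have hab : a ≠ b := fun h => huv (by rw [h])
    exact split_adj_some.mpr ⟨ht.2 a ha b hb hab,
      fun hc => hnxy ⟨hc.1 ▸ ha, hc.2 ▸ hb⟩, fun hc => hnxy ⟨hc.2 ▸ hb, hc.1 ▸ ha⟩⟩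

noncomputable def preTri (s : Finset (Option V)) : Finset V :=
  s.preimage some (fun a _ b _ h => Option.some_injective V h)

lemma mem_preTri {s : Finset (Option V)} {a : V} : a ∈ preTri s ↔ some a ∈ s :=
  Finset.mem_preimage

lemma image_preTri {s : Finset (Option V)} (h : none ∉ s) : (preTri s).image some = s := by
  ext o
  simp only [Finset.mem_image, mem_preTri]
  constructor
  · rintro ⟨a, ha, rfl⟩; exact ha
  · intro ho
    cases o with
    | none => exact absurd ho h
    | some a => exact ⟨a, ho, rfl⟩

lemma preTri_image (t : Finset V) : preTri (t.image some) = t := by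
  ext a; simp [mem_preTri]

lemma tri_of_none_not_mem (hxy : x ≠ y) {s : Finset (Option V)}
    (hs : IsTriangle (splitGraph G x y z) s) (h : none ∉ s) :
    IsTriangle G (preTri s) ∧ ¬(x ∈ preTri s ∧ y ∈ preTri s) := by
  have himg := image_preTri (s := s) h
  have hcard : (preTri s).card = 3 := by
    have h2 := Finset.card_image_of_injective (preTri s) (Option.some_injective V)
    rw [himg, hs.1] at h2; omega
  refine ⟨⟨hcard, ?_⟩, ?_⟩
  · intro a ha b hb hab
    have := hs.2 (some a) (mem_preTri.mp ha) (some b) (mem_preTri.mp hb) (by simpa using hab)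
    exact (split_adj_some.mp this).1
  · rintro ⟨h1, h2⟩
    have := hs.2 (some x) (mem_preTri.mp h1) (some y) (mem_preTri.mp h2) (by simpa using hxy)
    exact (split_adj_some.mp this).2.1 ⟨rfl, rfl⟩

lemma tri_none_mem {s : Finset (Option V)}
    (hs : IsTriangle (splitGraph G x y z) s) (h : none ∈ s) :
    s = {none, some x, some z} ∨ s = {none, some y, some z} := by
  have h2 : (s.erase none).card = 2 := by rw [Finset.card_erase_of_mem h, hs.1]
  obtain ⟨u, v, huv, hpair⟩ := Finset.card_eq_two.mp h2
  have hu' : u ∈ s.erase none := by rw [hpair]; simp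
  have hv' : v ∈ s.erase none := by rw [hpair]; simp
  have hu := Finset.mem_of_mem_erase hu'
  have hv := Finset.mem_of_mem_erase hv'
  obtain ⟨a, rfl⟩ := Option.ne_none_iff_exists'.mp (Finset.mem_erase.mp hu').1
  obtain ⟨b, rfl⟩ := Option.ne_none_iff_exists'.mp (Finset.mem_erase.mp hv').1
  have hax : a = x ∨ a = y ∨ a = z := split_adj_none.mp (hs.2 none h (some a) hu (by simp))
  have hbx : b = x ∨ b = y ∨ b = z := split_adj_none.mp (hs.2 none h (some b) hv (by simp))
  have hcons := split_adj_some.mp (hs.2 _ hu _ hv huv)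
  have hsins : s = insert none {some a, some b} := by rw [← hpair, Finset.insert_erase h]
  have habne : a ≠ b := by simpa using huv
  rcases hax with rfl|rfl|rfl <;> rcases hbx with rfl|rfl|rfl
  · exact absurd rfl habne
  · exact absurd ⟨rfl, rfl⟩ hcons.2.1
  · exact Or.inl hsins
  · exact absurd ⟨rfl, rfl⟩ hcons.2.2
  · exact absurd rfl habne
  · exact Or.inr hsins
  · rw [Finset.pair_comm] at hsins; exact Or.inl hsins
  · rw [Finset.pair_comm] at hsins; exact Or.inr hsins
  · exact absurd rfl habne

lemma card_inter_image (s t : Finset V) :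
    (s.image some ∩ t.image some).card = (s ∩ t).card := by
  rw [← Finset.image_inter _ _ (Option.some_injective V),
    Finset.card_image_of_injective _ (Option.some_injective V)]

lemma inter_A_image (t : Finset V) :
    (({none, some x, some z} : Finset (Option V)) ∩ t.image some) = ({x,z} ∩ t).image some := by
  ext o; cases o <;> simp

lemma inter_B_image (t : Finset V) :
    (({none, some y, some z} : Finset (Option V)) ∩ t.image some) = ({y,z} ∩ t).image some := by
  ext o; cases o <;> simp

lemma card_A_image (hxz : x ≠ z) (t : Finset V) :
    (({none, some x, some z} : Finset (Option V)) ∩ t.image some).card = 2 ↔ x ∈ t ∧ z ∈ t := by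
  rw [inter_A_image, Finset.card_image_of_injective _ (Option.some_injective V),
    pair_inter_card hxz]

lemma card_B_image (hyz : y ≠ z) (t : Finset V) :
    (({none, some y, some z} : Finset (Option V)) ∩ t.image some).card = 2 ↔ y ∈ t ∧ z ∈ t := by
  rw [inter_B_image, Finset.card_image_of_injective _ (Option.some_injective V),
    pair_inter_card hyz]

lemma interAB (hxy : x ≠ y) :
    (({none, some x, some z} : Finset (Option V)) ∩ {none, some y, some z}).card = 2 := by
  have he : ({none, some x, some z} : Finset (Option V)) ∩ {none, some y, some z}
      = {none, some z} := by
    ext o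
    cases o with
    | none => simp
    | some a =>
      simp only [Finset.mem_inter, Finset.mem_insert, Finset.mem_singleton,
        Option.some.injEq, reduceCtorEq, false_or]
      constructor
      · rintro ⟨h|h, h'|h'⟩
        · exact absurd (h.symm.trans h') hxy
        · exact h'
        · exact h
        · exact h
      · rintro rfl; exact ⟨Or.inr rfl, Or.inr rfl⟩
  rw [he, Finset.card_pair (by simp)]

lemma uniqTri [Fintype V] (hT : IsTriangle G {x,y,z}) (huniq : triCount G x y = 1) :
    ∀ t, IsTriangle G t → x ∈ t → y ∈ t → t = {x,y,z} := by
  intro t ht h1 h2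
  unfold triCount at huniq
  obtain ⟨a, ha⟩ := Set.ncard_eq_one.mp huniq
  have hm : ({x,y,z} : Finset V) ∈ {t : Finset V | IsTriangle G t ∧ x ∈ t ∧ y ∈ t} :=
    ⟨hT, by simp, by simp⟩
  have hm' : t ∈ {t : Finset V | IsTriangle G t ∧ x ∈ t ∧ y ∈ t} := ⟨ht, h1, h2⟩
  rw [ha, Set.mem_singleton_iff] at hm hm'
  exact hm'.trans hm.symm

lemma exists_other [Fintype V] {u v : V} (h2 : 2 ≤ triCount G u v) (w : Finset V) :
    ∃ P, IsTriangle G P ∧ u ∈ P ∧ v ∈ P ∧ P ≠ w := by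
  unfold triCount at h2
  have h1 : 1 < ({t : Finset V | IsTriangle G t ∧ u ∈ t ∧ v ∈ t}).ncard := by omega
  obtain ⟨a, ha, b, hb, hab⟩ := (Set.one_lt_ncard (Set.toFinite _)).mp h1
  by_cases haw : a = w
  · exact ⟨b, hb.1, hb.2.1, hb.2.2, fun h => hab (haw.trans h.symm)⟩
  · exact ⟨a, ha.1, ha.2.1, ha.2.2, haw⟩

/-! ### helpers for the main construction -/

lemma image_some_inj {s t : Finset V} (h : s.image some = t.image some) : s = t := by
  have := congrArg preTri h
  rwa [preTri_image, preTri_image] at this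

lemma AB_ne {x y z : V} (hxy : x ≠ y) (hyz : y ≠ z) :
    ({none, some y, some z} : Finset (Option V)) ≠ {none, some x, some z} := by
  intro h
  have : (some y) ∈ ({none, some x, some z} : Finset (Option V)) := h ▸ (by simp)
  simp only [Finset.mem_insert, Finset.mem_singleton, Option.some.injEq, reduceCtorEq,
    false_or] at this
  rcases this with h'|h'
  · exact hxy h'.symm
  · exact hyz h'

lemma card_xyz_inter_left {x y z : V} (hxz : x ≠ z) {t : Finset V}
    (h1 : x ∈ t) (h2 : z ∈ t) (hy : y ∉ t) : (({x,y,z} : Finset V) ∩ t).card = 2 := by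
  have he : ({x,y,z} : Finset V) ∩ t = {x,z} := by
    ext a
    simp only [Finset.mem_inter, Finset.mem_insert, Finset.mem_singleton]
    constructor
    · rintro ⟨rfl|rfl|rfl, h⟩
      · exact Or.inl rfl
      · exact absurd h hy
      · exact Or.inr rfl
    · rintro (rfl|rfl)
      · exact ⟨Or.inl rfl, h1⟩
      · exact ⟨Or.inr (Or.inr rfl), h2⟩
  rw [he, Finset.card_pair hxz]

lemma card_xyz_inter_right {x y z : V} (hyz : y ≠ z) {t : Finset V}
    (h1 : y ∈ t) (h2 : z ∈ t) (hx : x ∉ t) : (({x,y,z} : Finset V) ∩ t).card = 2 := by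
  have he : ({x,y,z} : Finset V) ∩ t = {y,z} := by
    ext a
    simp only [Finset.mem_inter, Finset.mem_insert, Finset.mem_singleton]
    constructor
    · rintro ⟨rfl|rfl|rfl, h⟩
      · exact absurd h hx
      · exact Or.inl rfl
      · exact Or.inr rfl
    · rintro (rfl|rfl)
      · exact ⟨Or.inr (Or.inl rfl), h1⟩
      · exact ⟨Or.inr (Or.inr rfl), h2⟩
  rw [he, Finset.card_pair hyz]

lemma card2_cases {x y z : V} {t : Finset V} (hnxy : ¬(x ∈ t ∧ y ∈ t))
    (h : (({x,y,z} : Finset V) ∩ t).card = 2) :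
    (x ∈ t ∧ z ∈ t) ∨ (y ∈ t ∧ z ∈ t) := by
  obtain ⟨a, b, hab, hpair⟩ := Finset.card_eq_two.mp h
  have ha : a ∈ ({x,y,z} : Finset V) ∩ t := by rw [hpair]; simp
  have hb : b ∈ ({x,y,z} : Finset V) ∩ t := by rw [hpair]; simp
  obtain ⟨ha1, ha2⟩ := Finset.mem_inter.mp ha
  obtain ⟨hb1, hb2⟩ := Finset.mem_inter.mp hb
  simp only [Finset.mem_insert, Finset.mem_singleton] at ha1 hb1
  rcases ha1 with rfl|rfl|rfl <;> rcases hb1 with rfl|rfl|rfl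
  · exact absurd rfl hab
  · exact absurd ⟨ha2, hb2⟩ hnxy
  · exact Or.inl ⟨ha2, hb2⟩
  · exact absurd ⟨hb2, ha2⟩ hnxy
  · exact absurd rfl hab
  · exact Or.inr ⟨ha2, hb2⟩
  · exact Or.inl ⟨hb2, ha2⟩
  · exact Or.inr ⟨hb2, ha2⟩
  · exact absurd rfl hab

/-- glue for `Fin (m+4)`: `0 ↦ B`, `m+3 ↦ A`, middle `i ↦ F i`. -/
def glue {α : Type*} (m : ℕ) (A B : α) (F : Fin (m+3) → α) (i : Fin (m+4)) : α :=
  if i.val = 0 then B else if i.val = m+3 then A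
  else F ⟨i.val % (m+3), Nat.mod_lt _ (by omega)⟩

lemma glue_zero {α : Type*} {m : ℕ} {A B : α} {F : Fin (m+3) → α} {i : Fin (m+4)}
    (h : i.val = 0) : glue m A B F i = B := by rw [glue, if_pos h]

lemma glue_last {α : Type*} {m : ℕ} {A B : α} {F : Fin (m+3) → α} {i : Fin (m+4)}
    (h : i.val = m+3) : glue m A B F i = A := by
  rw [glue, if_neg (by omega), if_pos h]

lemma glue_mid {α : Type*} {m : ℕ} {A B : α} {F : Fin (m+3) → α} {i : Fin (m+4)}
    (h0 : i.val ≠ 0) (hn : i.val ≠ m+3) (h : i.val < m+3) :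
    glue m A B F i = F ⟨i.val, h⟩ := by
  rw [glue, if_neg h0, if_neg hn]
  congr 1
  exact Fin.ext (Nat.mod_eq_of_lt h)

/-- glue for `Fin (m+3)`: `0 ↦ B`, middle `i ↦ F i`. -/
def glue1 {α : Type*} (m : ℕ) (B : α) (F : Fin (m+4) → α) (i : Fin (m+3)) : α :=
  if i.val = 0 then B else F ⟨i.val, Nat.lt_succ_of_lt i.isLt⟩

lemma glue1_zero {α : Type*} {m : ℕ} {B : α} {F : Fin (m+4) → α} {i : Fin (m+3)}
    (h : i.val = 0) : glue1 m B F i = B := by rw [glue1, if_pos h]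

lemma glue1_mid {α : Type*} {m : ℕ} {B : α} {F : Fin (m+4) → α} {i : Fin (m+3)}
    (h0 : i.val ≠ 0) (h : i.val < m+4) : glue1 m B F i = F ⟨i.val, h⟩ := by
  rw [glue1, if_neg h0]

/-! ### Forward direction -/

lemma forward [Fintype V] {G : SimpleGraph V} {x y z : V}
    (hT : IsTriangle G {x,y,z}) (huniq : triCount G x y = 1)
    (hxz2 : 2 ≤ triCount G x z) (hzy2 : 2 ≤ triCount G z y) (m : ℕ)
    (φ0 : triangleGraph G ≃g cycleGraph (m+3)) :
    Nonempty (triangleGraph (splitGraph G x y z) ≃g cycleGraph (m+4)) := by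
  obtain ⟨hxy, hxz, hyz⟩ := distinct3 hT.1
  have haxz : G.Adj x z := hT.2 x (by simp) z (by simp) hxz
  have hayz : G.Adj y z := hT.2 y (by simp) z (by simp) hyz
  have huq := uniqTri hT huniq
  set G' := splitGraph G x y z with hG'
  set vz : {t : Finset V // IsTriangle G t} := ⟨{x,y,z}, hT⟩ with hvz
  obtain ⟨P, hPt, hPx, hPz, hPne⟩ := exists_other hxz2 {x,y,z}
  obtain ⟨Q, hQt, hQz, hQy, hQne⟩ := exists_other hzy2 {x,y,z}
  have hPy : y ∉ P := fun hy => hPne (huq P hPt hPx hy)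
  have hQx : x ∉ Q := fun hx => hQne (huq Q hQt hx hQy)
  set Pv : {t : Finset V // IsTriangle G t} := ⟨P, hPt⟩ with hPv
  set Qv : {t : Finset V // IsTriangle G t} := ⟨Q, hQt⟩ with hQv
  have hPvne : Pv ≠ vz := fun h => hPne (congrArg Subtype.val h)
  have hQvne : Qv ≠ vz := fun h => hQne (congrArg Subtype.val h)
  have hnotvz : ∀ t : {t : Finset V // IsTriangle G t}, t ≠ vz → ¬(x ∈ t.1 ∧ y ∈ t.1) :=
    fun t ht hc => ht (Subtype.ext (huq t.1 t.2 hc.1 hc.2))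
  -- adjacency with vz
  have adjvz : ∀ t : {t : Finset V // IsTriangle G t}, t ≠ vz →
      ((triangleGraph G).Adj vz t ↔ ((x ∈ t.1 ∧ z ∈ t.1) ∨ (y ∈ t.1 ∧ z ∈ t.1))) := by
    intro t htne
    rw [triangleGraph_adj]
    constructor
    · rintro ⟨-, hcard⟩
      exact card2_cases (hnotvz t htne) hcard
    · rintro (⟨h1, h2⟩ | ⟨h1, h2⟩)
      · refine ⟨fun h => htne h.symm, ?_⟩
        exact card_xyz_inter_left hxz h1 h2 (fun hy => hnotvz t htne ⟨h1, hy⟩)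
      · refine ⟨fun h => htne h.symm, ?_⟩
        exact card_xyz_inter_right hyz h1 h2 (fun hx => hnotvz t htne ⟨hx, h1⟩)
  have adjvzP : (triangleGraph G).Adj vz Pv := (adjvz Pv hPvne).mpr (Or.inl ⟨hPx, hPz⟩)
  have adjvzQ : (triangleGraph G).Adj vz Qv := (adjvz Qv hQvne).mpr (Or.inr ⟨hQy, hQz⟩)
  -- normalize the isomorphism
  have hnorm : ∃ ψ : triangleGraph G ≃g cycleGraph (m+3), ψ vz = 0 ∧ (ψ Pv).val = m+2 := by
    set φ1 : triangleGraph G ≃g cycleGraph (m+3) := φ0.trans (rotIso (-(φ0 vz))) with hφ1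
    have hφ1vz : φ1 vz = 0 := by
      show φ0 vz + (-(φ0 vz)) = 0
      exact add_neg_cancel _
    have hadj1 : (cycleGraph (m+3)).Adj (φ1 vz) (φ1 Pv) := φ1.map_rel_iff.mpr adjvzP
    rw [hφ1vz] at hadj1
    rw [cycAdj] at hadj1
    simp only [Fin.val_zero] at hadj1
    have hPcases : (φ1 Pv).val = 1 ∨ (φ1 Pv).val = m+2 := by omega
    by_cases hc : (φ1 Pv).val = m+2
    · exact ⟨φ1, hφ1vz, hc⟩
    · have h1 : (φ1 Pv).val = 1 := by omega
      refine ⟨φ1.trans negIso, ?_, ?_⟩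
      · show -(φ1 vz) = 0
        rw [hφ1vz, neg_zero]
      · show ((-(φ1 Pv) : Fin (m+3))).val = m+2
        have he : φ1 Pv = 1 := Fin.ext (by rw [h1, Fin.val_one])
        rw [he]
        exact Fin.coe_neg_one
  obtain ⟨ψ, hψvz, hψP⟩ := hnorm
  have hψQ : (ψ Qv).val = 1 := by
    have hadj1 : (cycleGraph (m+3)).Adj (ψ vz) (ψ Qv) := ψ.map_rel_iff.mpr adjvzQ
    rw [hψvz, cycAdj] at hadj1
    simp only [Fin.val_zero] at hadj1
    have : (ψ Qv).val = 1 ∨ (ψ Qv).val = m+2 := by omega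
    rcases this with h | h
    · exact h
    · exfalso
      have : ψ Qv = ψ Pv := Fin.ext (by rw [h, hψP])
      have hQP : Qv = Pv := ψ.toEquiv.injective this
      exact hQx (by rw [show Q = P from congrArg Subtype.val hQP]; exact hPx)
  -- key characterizations
  have keyXZ : ∀ t : {t : Finset V // IsTriangle G t}, t ≠ vz →
      ((x ∈ t.1 ∧ z ∈ t.1) ↔ (ψ t).val = m+2) := by
    intro t htne
    constructor
    · rintro ⟨h1, h2⟩
      have hadj : (cycleGraph (m+3)).Adj (ψ vz) (ψ t) :=
        ψ.map_rel_iff.mpr ((adjvz t htne).mpr (Or.inl ⟨h1, h2⟩))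
      rw [hψvz, cycAdj] at hadj
      simp only [Fin.val_zero] at hadj
      have hv : (ψ t).val = 1 ∨ (ψ t).val = m+2 := by omega
      rcases hv with hv | hv
      · exfalso
        have : ψ t = ψ Qv := Fin.ext (by rw [hv, hψQ])
        have htQ : t = Qv := ψ.toEquiv.injective this
        exact hQx (by rw [← show t.1 = Q from congrArg Subtype.val htQ]; exact h1)
      · exact hv
    · intro hv
      have : ψ t = ψ Pv := Fin.ext (by rw [hv, hψP])
      have htP : t = Pv := ψ.toEquiv.injective this
      rw [show t.1 = P from congrArg Subtype.val htP]
      exact ⟨hPx, hPz⟩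
  have keyYZ : ∀ t : {t : Finset V // IsTriangle G t}, t ≠ vz →
      ((y ∈ t.1 ∧ z ∈ t.1) ↔ (ψ t).val = 1) := by
    intro t htne
    constructor
    · rintro ⟨h1, h2⟩
      have hadj : (cycleGraph (m+3)).Adj (ψ vz) (ψ t) :=
        ψ.map_rel_iff.mpr ((adjvz t htne).mpr (Or.inr ⟨h1, h2⟩))
      rw [hψvz, cycAdj] at hadj
      simp only [Fin.val_zero] at hadj
      have hv : (ψ t).val = 1 ∨ (ψ t).val = m+2 := by omega
      rcases hv with hv | hv
      · exact hv
      · exfalso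
        have : ψ t = ψ Pv := Fin.ext (by rw [hv, hψP])
        have htP : t = Pv := ψ.toEquiv.injective this
        exact hPy (by rw [← show t.1 = P from congrArg Subtype.val htP]; exact h1)
    · intro hv
      have : ψ t = ψ Qv := Fin.ext (by rw [hv, hψQ])
      have htQ : t = Qv := ψ.toEquiv.injective this
      rw [show t.1 = Q from congrArg Subtype.val htQ]
      exact ⟨hQy, hQz⟩
  have hsymm_ne : ∀ j : Fin (m+3), j.val ≠ 0 → ψ.symm j ≠ vz := by
    intro j hj h
    have := congrArg ψ h
    rw [RelIso.apply_symm_apply, hψvz] at this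
    exact hj (by rw [this]; rfl)
  -- the map
  set F : Fin (m+3) → Finset (Option V) := fun j => (ψ.symm j).1.image some with hF
  have htri : ∀ i : Fin (m+4),
      IsTriangle G' (glue m {none, some x, some z} {none, some y, some z} F i) := by
    intro i
    by_cases h0 : i.val = 0
    · rw [glue_zero h0]
      exact isTriangle_B hxy hxz hyz hayz
    · by_cases hn : i.val = m+3
      · rw [glue_last hn]
        exact isTriangle_A hxy hxz hyz haxz
      · have hlt : i.val < m+3 := by have := i.isLt; omega
        rw [glue_mid h0 hn hlt]
        exact isTriangle_image (ψ.symm ⟨i.val, hlt⟩).2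
          (hnotvz _ (hsymm_ne ⟨i.val, hlt⟩ h0))
  set f : Fin (m+4) → {s : Finset (Option V) // IsTriangle G' s} :=
    fun i => ⟨glue m {none, some x, some z} {none, some y, some z} F i, htri i⟩ with hf
  have hfval : ∀ i, (f i).1 = glue m {none, some x, some z} {none, some y, some z} F i :=
    fun i => rfl
  -- injectivity
  have hinj : Function.Injective f := by
    intro i j hij
    have hij' : glue m {none, some x, some z} {none, some y, some z} F i
        = glue m {none, some x, some z} {none, some y, some z} F j :=
      congrArg Subtype.val hij
    have hi := i.isLt; have hj := j.isLt
    by_cases hi0 : i.val = 0 <;> by_cases hin : i.val = m+3 <;>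
      by_cases hj0 : j.val = 0 <;> by_cases hjn : j.val = m+3
    all_goals try (exfalso; omega)
    all_goals try (exfalso; omega)
    · exact Fin.ext (hi0.trans hj0.symm)
    · rw [glue_zero hi0, glue_last hjn] at hij'
      exact absurd hij' (AB_ne hxy hyz)
    · rw [glue_zero hi0, glue_mid hj0 hjn (by omega)] at hij'
      exfalso
      have : (none : Option V) ∈ F ⟨j.val, by omega⟩ := hij' ▸ (by simp)
      simp [hF] at this
    · rw [glue_last hin, glue_zero hj0] at hij'
      exact absurd hij'.symm (AB_ne hxy hyz)
    · exact Fin.ext (hin.trans hjn.symm)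
    · rw [glue_last hin, glue_mid hj0 hjn (by omega)] at hij'
      exfalso
      have : (none : Option V) ∈ F ⟨j.val, by omega⟩ := hij' ▸ (by simp)
      simp [hF] at this
    · rw [glue_mid hi0 hin (by omega), glue_zero hj0] at hij'
      exfalso
      have : (none : Option V) ∈ F ⟨i.val, by omega⟩ := hij'.symm ▸ (by simp)
      simp [hF] at this
    · rw [glue_mid hi0 hin (by omega), glue_last hjn] at hij'
      exfalso
      have : (none : Option V) ∈ F ⟨i.val, by omega⟩ := hij'.symm ▸ (by simp)
      simp [hF] at this
    · rw [glue_mid hi0 hin (by omega), glue_mid hj0 hjn (by omega)] at hij'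
      have h1 : ψ.symm ⟨i.val, by omega⟩ = ψ.symm ⟨j.val, by omega⟩ :=
        Subtype.ext (image_some_inj hij')
      have h2 : (⟨i.val, by omega⟩ : Fin (m+3)) = ⟨j.val, by omega⟩ :=
        ψ.symm.toEquiv.injective h1
      have h3 := congrArg Fin.val h2
      exact Fin.ext h3
  -- surjectivity
  have hsurj : Function.Surjective f := by
    intro s
    by_cases hns : none ∈ s.1
    · rcases tri_none_mem s.2 hns with h | h
      · refine ⟨⟨m+3, by omega⟩, Subtype.ext ?_⟩
        rw [hfval, glue_last (by rfl), h]
      · refine ⟨⟨0, by omega⟩, Subtype.ext ?_⟩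
        rw [hfval, glue_zero (by rfl), h]
    · obtain ⟨ht0, hnxy0⟩ := tri_of_none_not_mem hxy s.2 hns
      set tv : {t : Finset V // IsTriangle G t} := ⟨preTri s.1, ht0⟩ with htv
      have htvne : tv ≠ vz := by
        intro h
        have hv : preTri s.1 = {x,y,z} := congrArg Subtype.val h
        exact hnxy0 ⟨by rw [hv]; simp, by rw [hv]; simp⟩
      have hj0 : (ψ tv).val ≠ 0 := by
        intro h
        have : ψ tv = ψ vz := by rw [hψvz]; exact Fin.ext (by rw [h]; rfl)
        exact htvne (ψ.toEquiv.injective this)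
      have hjlt : (ψ tv).val < m+3 := (ψ tv).isLt
      refine ⟨⟨(ψ tv).val, by omega⟩, Subtype.ext ?_⟩
      rw [hfval, glue_mid hj0 (by simpa using hjlt.ne) hjlt]
      have he : (⟨(ψ tv).val, hjlt⟩ : Fin (m+3)) = ψ tv := Fin.ext rfl
      show (ψ.symm ⟨(ψ tv).val, hjlt⟩).1.image some = s.1
      rw [he, RelIso.symm_apply_apply]
      exact image_preTri hns
  -- adjacency
  have hadj : ∀ a b : Fin (m+4),
      (triangleGraph G').Adj (f a) (f b) ↔ (cycleGraph (m+4)).Adj a b := by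
    intro a b
    have ha := a.isLt; have hb := b.isLt
    rw [triangleGraph_adj, cycAdj]
    by_cases ha0 : a.val = 0 <;> by_cases han : a.val = m+3 <;>
      by_cases hb0 : b.val = 0 <;> by_cases hbn : b.val = m+3
    all_goals try (exfalso; omega)
    all_goals try (exfalso; omega)
    -- (0,0)
    · constructor
      · rintro ⟨hne, -⟩
        exact absurd (Subtype.ext ((glue_zero ha0).trans (glue_zero hb0).symm)) hne
      · intro h; exfalso; omega
    -- (0, m+3)
    · constructor
      · intro _
        omega
      · intro _
        refine ⟨?_, ?_⟩
        · intro h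
          exact AB_ne hxy hyz (((glue_zero ha0).symm.trans
            (congrArg Subtype.val h)).trans (glue_last hbn))
        · rw [hfval, hfval, glue_zero ha0, glue_last hbn, Finset.inter_comm]
          exact interAB hxy
    -- (0, mid)
    · have hblt : b.val < m+3 := by omega
      have htne := hsymm_ne ⟨b.val, hblt⟩ hb0
      constructor
      · rintro ⟨-, hcard⟩
        rw [hfval, hfval, glue_zero ha0, glue_mid hb0 hbn hblt] at hcard
        simp only [hF] at hcard
        have hyz' := (card_B_image hyz _).mp hcard
        have hv := (keyYZ _ htne).mp hyz'
        rw [RelIso.apply_symm_apply] at hv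
        have : b.val = 1 := hv
        omega
      · intro h
        have hb1 : b.val = 1 := by omega
        refine ⟨?_, ?_⟩
        · intro hfe
          have h1 : glue m {none, some x, some z} {none, some y, some z} F a
              = glue m {none, some x, some z} {none, some y, some z} F b :=
            congrArg Subtype.val hfe
          rw [glue_zero ha0, glue_mid hb0 hbn hblt] at h1
          have : (none : Option V) ∈ F ⟨b.val, hblt⟩ := h1 ▸ (by simp)
          simp [hF] at this
        · rw [hfval, hfval, glue_zero ha0, glue_mid hb0 hbn hblt]
          simp only [hF]
          rw [card_B_image hyz]
          refine (keyYZ _ htne).mpr ?_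
          rw [RelIso.apply_symm_apply]
          exact hb1
    -- (m+3, 0)
    · constructor
      · intro _
        omega
      · intro _
        refine ⟨?_, ?_⟩
        · intro h
          exact AB_ne hxy hyz (((glue_zero hb0).symm.trans
            (congrArg Subtype.val h.symm)).trans (glue_last han))
        · rw [hfval, hfval, glue_zero hb0, glue_last han]
          exact interAB hxy
    -- (m+3, m+3)
    · constructor
      · rintro ⟨hne, -⟩
        exact absurd (Subtype.ext ((glue_last han).trans (glue_last hbn).symm)) hne
      · intro h; exfalso; omega
    -- (m+3, mid)
    · have hblt : b.val < m+3 := by omega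
      have htne := hsymm_ne ⟨b.val, hblt⟩ hb0
      constructor
      · rintro ⟨-, hcard⟩
        rw [hfval, hfval, glue_last han, glue_mid hb0 hbn hblt] at hcard
        simp only [hF] at hcard
        have hxz' := (card_A_image hxz _).mp hcard
        have hv := (keyXZ _ htne).mp hxz'
        rw [RelIso.apply_symm_apply] at hv
        have : b.val = m+2 := hv
        omega
      · intro h
        have hb1 : b.val = m+2 := by omega
        refine ⟨?_, ?_⟩
        · intro hfe
          have h1 : glue m {none, some x, some z} {none, some y, some z} F a
              = glue m {none, some x, some z} {none, some y, some z} F b :=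
            congrArg Subtype.val hfe
          rw [glue_last han, glue_mid hb0 hbn hblt] at h1
          have : (none : Option V) ∈ F ⟨b.val, hblt⟩ := h1 ▸ (by simp)
          simp [hF] at this
        · rw [hfval, hfval, glue_last han, glue_mid hb0 hbn hblt]
          simp only [hF]
          rw [card_A_image hxz]
          refine (keyXZ _ htne).mpr ?_
          rw [RelIso.apply_symm_apply]
          exact hb1
    -- (mid, 0)
    · have halt : a.val < m+3 := by omega
      have htne := hsymm_ne ⟨a.val, halt⟩ ha0
      constructor
      · rintro ⟨-, hcard⟩
        rw [hfval, hfval, glue_zero hb0, glue_mid ha0 han halt, Finset.inter_comm] at hcard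
        simp only [hF] at hcard
        have hyz' := (card_B_image hyz _).mp hcard
        have hv := (keyYZ _ htne).mp hyz'
        rw [RelIso.apply_symm_apply] at hv
        have : a.val = 1 := hv
        omega
      · intro h
        have ha1 : a.val = 1 := by omega
        refine ⟨?_, ?_⟩
        · intro hfe
          have h1 : glue m {none, some x, some z} {none, some y, some z} F a
              = glue m {none, some x, some z} {none, some y, some z} F b :=
            congrArg Subtype.val hfe
          rw [glue_zero hb0, glue_mid ha0 han halt] at h1
          have : (none : Option V) ∈ F ⟨a.val, halt⟩ := h1.symm ▸ (by simp)
          simp [hF] at this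
        · rw [hfval, hfval, glue_zero hb0, glue_mid ha0 han halt, Finset.inter_comm]
          simp only [hF]
          rw [card_B_image hyz]
          refine (keyYZ _ htne).mpr ?_
          rw [RelIso.apply_symm_apply]
          exact ha1
    -- (mid, m+3)
    · have halt : a.val < m+3 := by omega
      have htne := hsymm_ne ⟨a.val, halt⟩ ha0
      constructor
      · rintro ⟨-, hcard⟩
        rw [hfval, hfval, glue_last hbn, glue_mid ha0 han halt, Finset.inter_comm] at hcard
        simp only [hF] at hcard
        have hxz' := (card_A_image hxz _).mp hcard
        have hv := (keyXZ _ htne).mp hxz'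
        rw [RelIso.apply_symm_apply] at hv
        have : a.val = m+2 := hv
        omega
      · intro h
        have ha1 : a.val = m+2 := by omega
        refine ⟨?_, ?_⟩
        · intro hfe
          have h1 : glue m {none, some x, some z} {none, some y, some z} F a
              = glue m {none, some x, some z} {none, some y, some z} F b :=
            congrArg Subtype.val hfe
          rw [glue_last hbn, glue_mid ha0 han halt] at h1
          have : (none : Option V) ∈ F ⟨a.val, halt⟩ := h1.symm ▸ (by simp)
          simp [hF] at this
        · rw [hfval, hfval, glue_last hbn, glue_mid ha0 han halt, Finset.inter_comm]
          simp only [hF]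
          rw [card_A_image hxz]
          refine (keyXZ _ htne).mpr ?_
          rw [RelIso.apply_symm_apply]
          exact ha1
    -- (mid, mid)
    · have halt : a.val < m+3 := by omega
      have hblt : b.val < m+3 := by omega
      have hCiff : (cycleGraph (m+3)).Adj ⟨a.val, halt⟩ ⟨b.val, hblt⟩ ↔
          (triangleGraph G).Adj (ψ.symm ⟨a.val, halt⟩) (ψ.symm ⟨b.val, hblt⟩) :=
        ψ.symm.map_rel_iff.symm
      constructor
      · rintro ⟨hne, hcard⟩
        rw [hfval, hfval, glue_mid ha0 han halt, glue_mid hb0 hbn hblt] at hcard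
        simp only [hF] at hcard
        rw [card_inter_image] at hcard
        have htt : ψ.symm ⟨a.val, halt⟩ ≠ ψ.symm ⟨b.val, hblt⟩ := by
          intro h
          apply hne
          apply Subtype.ext
          rw [hfval, hfval, glue_mid ha0 han halt, glue_mid hb0 hbn hblt]
          simp only [hF]
          rw [congrArg Subtype.val h]
        have hadjT : (triangleGraph G).Adj (ψ.symm ⟨a.val, halt⟩) (ψ.symm ⟨b.val, hblt⟩) :=
          ⟨htt, hcard⟩
        have hC := hCiff.mpr hadjT
        rw [cycAdj] at hC
        simp only at hC
        omega
      · intro h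
        have hC : (cycleGraph (m+3)).Adj ⟨a.val, halt⟩ ⟨b.val, hblt⟩ := by
          rw [cycAdj]
          simp only
          omega
        obtain ⟨hne', hcard'⟩ := (triangleGraph_adj _ _ _).mp (hCiff.mp hC)
        refine ⟨?_, ?_⟩
        · intro hfe
          apply hne'
          apply Subtype.ext
          have h1 : glue m {none, some x, some z} {none, some y, some z} F a
              = glue m {none, some x, some z} {none, some y, some z} F b :=
            congrArg Subtype.val hfe
          rw [glue_mid ha0 han halt, glue_mid hb0 hbn hblt, hF] at h1
          exact image_some_inj h1
        · rw [hfval, hfval, glue_mid ha0 han halt, glue_mid hb0 hbn hblt]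
          simp only [hF]
          rw [card_inter_image]
          exact hcard'
  exact ⟨(RelIso.symm ⟨Equiv.ofBijective f ⟨hinj, hsurj⟩, hadj _ _⟩ :
    triangleGraph G' ≃g cycleGraph (m+4))⟩

/-! ### Backward direction -/

lemma backward [Fintype V] {G : SimpleGraph V} {x y z : V}
    (hT : IsTriangle G {x,y,z}) (huniq : triCount G x y = 1) (m : ℕ)
    (ψ0 : triangleGraph (splitGraph G x y z) ≃g cycleGraph (m+4)) :
    Nonempty (triangleGraph G ≃g cycleGraph (m+3)) := by
  obtain ⟨hxy, hxz, hyz⟩ := distinct3 hT.1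
  have haxz : G.Adj x z := hT.2 x (by simp) z (by simp) hxz
  have hayz : G.Adj y z := hT.2 y (by simp) z (by simp) hyz
  have huq := uniqTri hT huniq
  set G' := splitGraph G x y z with hG'
  set Av : {s : Finset (Option V) // IsTriangle G' s} :=
    ⟨{none, some x, some z}, isTriangle_A hxy hxz hyz haxz⟩ with hAv
  set Bv : {s : Finset (Option V) // IsTriangle G' s} :=
    ⟨{none, some y, some z}, isTriangle_B hxy hxz hyz hayz⟩ with hBv
  have hABne' : Av ≠ Bv := fun h => AB_ne hxy hyz (congrArg Subtype.val h).symm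
  have adjAB : (triangleGraph G').Adj Av Bv := ⟨hABne', interAB hxy⟩
  -- normalize
  have hnorm : ∃ ψ : triangleGraph G' ≃g cycleGraph (m+4), ψ Bv = 0 ∧ (ψ Av).val = m+3 := by
    set ψ1 : triangleGraph G' ≃g cycleGraph (m+4) := ψ0.trans (rotIso (-(ψ0 Bv))) with hψ1
    have hψ1B : ψ1 Bv = 0 := by
      show ψ0 Bv + (-(ψ0 Bv)) = 0
      exact add_neg_cancel _
    have hadj1 : (cycleGraph (m+4)).Adj (ψ1 Av) (ψ1 Bv) := ψ1.map_rel_iff.mpr adjAB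
    rw [hψ1B, cycAdj] at hadj1
    simp only [Fin.val_zero] at hadj1
    have hcases : (ψ1 Av).val = 1 ∨ (ψ1 Av).val = m+3 := by omega
    by_cases hc : (ψ1 Av).val = m+3
    · exact ⟨ψ1, hψ1B, hc⟩
    · have h1 : (ψ1 Av).val = 1 := by omega
      refine ⟨ψ1.trans negIso, ?_, ?_⟩
      · show -(ψ1 Bv) = 0
        rw [hψ1B, neg_zero]
      · show ((-(ψ1 Av) : Fin (m+4))).val = m+3
        have he : ψ1 Av = 1 := Fin.ext (by rw [h1, Fin.val_one])
        rw [he]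
        exact Fin.coe_neg_one
  obtain ⟨ψ, hψB, hψA⟩ := hnorm
  have hsymmA : ∀ j : Fin (m+4), j.val ≠ m+3 → ψ.symm j ≠ Av := by
    intro j hj h
    have := congrArg ψ h
    rw [RelIso.apply_symm_apply] at this
    exact hj (by rw [this]; exact hψA)
  have hsymmB : ∀ j : Fin (m+4), j.val ≠ 0 → ψ.symm j ≠ Bv := by
    intro j hj h
    have := congrArg ψ h
    rw [RelIso.apply_symm_apply, hψB] at this
    exact hj (by rw [this]; rfl)
  have hnone : ∀ j : Fin (m+4), j.val ≠ 0 → j.val ≠ m+3 → none ∉ (ψ.symm j).1 := by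
    intro j h0 hn hmem
    rcases tri_none_mem (ψ.symm j).2 hmem with h | h
    · exact hsymmA j hn (Subtype.ext h)
    · exact hsymmB j h0 (Subtype.ext h)
  have hprops : ∀ j : Fin (m+4), j.val ≠ 0 → j.val ≠ m+3 →
      IsTriangle G (preTri (ψ.symm j).1) ∧
        ¬(x ∈ preTri (ψ.symm j).1 ∧ y ∈ preTri (ψ.symm j).1) :=
    fun j h0 hn => tri_of_none_not_mem hxy (ψ.symm j).2 (hnone j h0 hn)
  -- key adjacency characterizations
  have keyA : ∀ j : Fin (m+4), (hj0 : j.val ≠ 0) → (hjn : j.val ≠ m+3) →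
      ((x ∈ preTri (ψ.symm j).1 ∧ z ∈ preTri (ψ.symm j).1) ↔ j.val = m+2) := by
    intro j hj0 hjn
    have himg := image_preTri (hnone j hj0 hjn)
    have hAdjA : (triangleGraph G').Adj Av (ψ.symm j) ↔
        (x ∈ preTri (ψ.symm j).1 ∧ z ∈ preTri (ψ.symm j).1) := by
      rw [triangleGraph_adj]
      constructor
      · rintro ⟨-, hc⟩
        rw [← himg] at hc
        exact (card_A_image hxz _).mp hc
      · intro h
        refine ⟨?_, ?_⟩
        · intro he
          have : (none : Option V) ∈ (ψ.symm j).1 := by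
            rw [← congrArg Subtype.val he]; simp [hAv]
          exact hnone j hj0 hjn this
        · rw [← himg]
          exact (card_A_image hxz _).mpr h
    rw [← hAdjA, ← ψ.map_rel_iff, RelIso.apply_symm_apply]
    have hA' : ψ Av = ⟨m+3, by omega⟩ := Fin.ext hψA
    rw [hA', cycAdj]
    have := j.isLt
    constructor
    · intro h
      simp only [] at h
      omega
    · intro h
      simp only []
      omega
  have keyB : ∀ j : Fin (m+4), (hj0 : j.val ≠ 0) → (hjn : j.val ≠ m+3) →
      ((y ∈ preTri (ψ.symm j).1 ∧ z ∈ preTri (ψ.symm j).1) ↔ j.val = 1) := by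
    intro j hj0 hjn
    have himg := image_preTri (hnone j hj0 hjn)
    have hAdjB : (triangleGraph G').Adj Bv (ψ.symm j) ↔
        (y ∈ preTri (ψ.symm j).1 ∧ z ∈ preTri (ψ.symm j).1) := by
      rw [triangleGraph_adj]
      constructor
      · rintro ⟨-, hc⟩
        rw [← himg] at hc
        exact (card_B_image hyz _).mp hc
      · intro h
        refine ⟨?_, ?_⟩
        · intro he
          have : (none : Option V) ∈ (ψ.symm j).1 := by
            rw [← congrArg Subtype.val he]; simp [hBv]
          exact hnone j hj0 hjn this
        · rw [← himg]
          exact (card_B_image hyz _).mpr h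
    rw [← hAdjB, ← ψ.map_rel_iff, RelIso.apply_symm_apply, hψB, cycAdj]
    have := j.isLt
    constructor
    · intro h
      simp only [Fin.val_zero] at h
      omega
    · intro h
      simp only [Fin.val_zero]
      omega
  -- the map
  set F : Fin (m+4) → Finset V := fun j => preTri (ψ.symm j).1 with hF
  have htri : ∀ i : Fin (m+3), IsTriangle G (glue1 m {x,y,z} F i) := by
    intro i
    by_cases h0 : i.val = 0
    · rw [glue1_zero h0]; exact hT
    · have hlt : i.val < m+4 := by have := i.isLt; omega
      rw [glue1_mid h0 hlt]
      exact (hprops ⟨i.val, hlt⟩ h0 (by have := i.isLt; simp; omega)).1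
  set g : Fin (m+3) → {t : Finset V // IsTriangle G t} :=
    fun i => ⟨glue1 m {x,y,z} F i, htri i⟩ with hg
  have hgval : ∀ i, (g i).1 = glue1 m {x,y,z} F i := fun i => rfl
  -- injectivity
  have hinj : Function.Injective g := by
    intro i j hij
    have hij' : glue1 m {x,y,z} F i = glue1 m {x,y,z} F j := congrArg Subtype.val hij
    have hi := i.isLt; have hj := j.isLt
    by_cases hi0 : i.val = 0 <;> by_cases hj0 : j.val = 0
    · exact Fin.ext (hi0.trans hj0.symm)
    · rw [glue1_zero hi0, glue1_mid hj0 (by omega)] at hij'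
      exfalso
      refine (hprops ⟨j.val, by omega⟩ hj0 (by simp; omega)).2 ?_
      constructor
      · have : x ∈ ({x,y,z} : Finset V) := by simp
        rw [hij'] at this
        simpa only [hF] using this
      · have : y ∈ ({x,y,z} : Finset V) := by simp
        rw [hij'] at this
        simpa only [hF] using this
    · rw [glue1_zero hj0, glue1_mid hi0 (by omega)] at hij'
      exfalso
      refine (hprops ⟨i.val, by omega⟩ hi0 (by simp; omega)).2 ?_
      constructor
      · have : x ∈ ({x,y,z} : Finset V) := by simp
        rw [← hij'] at this
        simpa only [hF] using this
      · have : y ∈ ({x,y,z} : Finset V) := by simp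
        rw [← hij'] at this
        simpa only [hF] using this
    · rw [glue1_mid hi0 (by omega), glue1_mid hj0 (by omega)] at hij'
      simp only [hF] at hij'
      have h1 : (ψ.symm ⟨i.val, by omega⟩).1 = (ψ.symm ⟨j.val, by omega⟩).1 := by
        have := congrArg (Finset.image some) hij'
        rwa [image_preTri (hnone _ hi0 (by simp; omega)),
          image_preTri (hnone _ hj0 (by simp; omega))] at this
      have h2 : (⟨i.val, by omega⟩ : Fin (m+4)) = ⟨j.val, by omega⟩ :=
        ψ.symm.toEquiv.injective (Subtype.ext h1)
      have h3 := congrArg Fin.val h2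
      exact Fin.ext h3
  -- surjectivity
  have hsurj : Function.Surjective g := by
    intro tv
    by_cases hvz : tv.1 = {x,y,z}
    · refine ⟨⟨0, by omega⟩, Subtype.ext ?_⟩
      rw [hgval, glue1_zero (by rfl), hvz]
    · have hnxy : ¬(x ∈ tv.1 ∧ y ∈ tv.1) := fun hc => hvz (huq tv.1 tv.2 hc.1 hc.2)
      set sv : {s : Finset (Option V) // IsTriangle G' s} :=
        ⟨tv.1.image some, isTriangle_image tv.2 hnxy⟩ with hsv
      have hsnone : none ∉ sv.1 := by simp [hsv]
      have hj0 : (ψ sv).val ≠ 0 := by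
        intro h
        have : ψ sv = ψ Bv := by rw [hψB]; exact Fin.ext (by rw [h]; rfl)
        have hEq : sv = Bv := ψ.toEquiv.injective this
        apply hsnone
        rw [congrArg Subtype.val hEq]
        simp [hBv]
      have hjn : (ψ sv).val ≠ m+3 := by
        intro h
        have : ψ sv = ψ Av := by exact Fin.ext (by rw [h, hψA])
        have hEq : sv = Av := ψ.toEquiv.injective this
        apply hsnone
        rw [congrArg Subtype.val hEq]
        simp [hAv]
      have hjlt : (ψ sv).val < m+4 := (ψ sv).isLt
      have hjlt3 : (ψ sv).val < m+3 := by omega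
      refine ⟨⟨(ψ sv).val, hjlt3⟩, Subtype.ext ?_⟩
      rw [hgval, glue1_mid (i := ⟨(ψ sv).val, hjlt3⟩) hj0 hjlt]
      show F ⟨(ψ sv).val, hjlt⟩ = tv.1
      simp only [hF]
      have he : (⟨(ψ sv).val, hjlt⟩ : Fin (m+4)) = ψ sv := Fin.ext rfl
      rw [he, RelIso.symm_apply_apply]
      show preTri (tv.1.image some) = tv.1
      exact preTri_image tv.1
  -- adjacency
  have hadj : ∀ a b : Fin (m+3),
      (triangleGraph G).Adj (g a) (g b) ↔ (cycleGraph (m+3)).Adj a b := by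
    intro a b
    have ha := a.isLt; have hb := b.isLt
    rw [triangleGraph_adj, cycAdj]
    by_cases ha0 : a.val = 0 <;> by_cases hb0 : b.val = 0
    -- (0,0)
    · constructor
      · rintro ⟨hne, -⟩
        exact absurd (Subtype.ext (((hgval a).trans (glue1_zero ha0)).trans
          ((hgval b).trans (glue1_zero hb0)).symm)) hne
      · intro h; exfalso; omega
    -- (0, mid)
    · have hblt : b.val < m+4 := by omega
      have hbn : b.val ≠ m+3 := by omega
      have hnxy' := (hprops ⟨b.val, hblt⟩ hb0 hbn).2
      constructor
      · rintro ⟨-, hcard⟩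
        rw [hgval, hgval, glue1_zero ha0, glue1_mid hb0 hblt] at hcard
        simp only [hF] at hcard
        rcases card2_cases hnxy' hcard with h | h
        · have := (keyA ⟨b.val, hblt⟩ hb0 hbn).mp h
          simp only [] at this
          omega
        · have := (keyB ⟨b.val, hblt⟩ hb0 hbn).mp h
          simp only [] at this
          omega
      · intro h
        have hb' : b.val = 1 ∨ b.val = m+2 := by omega
        refine ⟨?_, ?_⟩
        · intro hfe
          have h1 : glue1 m {x,y,z} F a = glue1 m {x,y,z} F b := congrArg Subtype.val hfe
          rw [glue1_zero ha0, glue1_mid hb0 hblt] at h1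
          apply hnxy'
          constructor
          · have : x ∈ ({x,y,z} : Finset V) := by simp
            rw [h1] at this
            simpa only [hF] using this
          · have : y ∈ ({x,y,z} : Finset V) := by simp
            rw [h1] at this
            simpa only [hF] using this
        · rw [hgval, hgval, glue1_zero ha0, glue1_mid hb0 hblt]
          simp only [hF]
          rcases hb' with hb' | hb'
          · have hyzt := (keyB ⟨b.val, hblt⟩ hb0 hbn).mpr hb'
            exact card_xyz_inter_right hyz hyzt.1 hyzt.2
              (fun hx' => hnxy' ⟨hx', hyzt.1⟩)
          · have hxzt := (keyA ⟨b.val, hblt⟩ hb0 hbn).mpr hb'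
            exact card_xyz_inter_left hxz hxzt.1 hxzt.2
              (fun hy' => hnxy' ⟨hxzt.1, hy'⟩)
    -- (mid, 0)
    · have halt : a.val < m+4 := by omega
      have han : a.val ≠ m+3 := by omega
      have hnxy' := (hprops ⟨a.val, halt⟩ ha0 han).2
      constructor
      · rintro ⟨-, hcard⟩
        rw [hgval, hgval, glue1_zero hb0, glue1_mid ha0 halt, Finset.inter_comm] at hcard
        simp only [hF] at hcard
        rcases card2_cases hnxy' hcard with h | h
        · have := (keyA ⟨a.val, halt⟩ ha0 han).mp h
          simp only [] at this
          omega
        · have := (keyB ⟨a.val, halt⟩ ha0 han).mp h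
          simp only [] at this
          omega
      · intro h
        have ha' : a.val = 1 ∨ a.val = m+2 := by omega
        refine ⟨?_, ?_⟩
        · intro hfe
          have h1 : glue1 m {x,y,z} F a = glue1 m {x,y,z} F b := congrArg Subtype.val hfe
          rw [glue1_zero hb0, glue1_mid ha0 halt] at h1
          apply hnxy'
          constructor
          · have : x ∈ ({x,y,z} : Finset V) := by simp
            rw [← h1] at this
            simpa only [hF] using this
          · have : y ∈ ({x,y,z} : Finset V) := by simp
            rw [← h1] at this
            simpa only [hF] using this
        · rw [hgval, hgval, glue1_zero hb0, glue1_mid ha0 halt, Finset.inter_comm]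
          simp only [hF]
          rcases ha' with ha' | ha'
          · have hyzt := (keyB ⟨a.val, halt⟩ ha0 han).mpr ha'
            exact card_xyz_inter_right hyz hyzt.1 hyzt.2
              (fun hx' => hnxy' ⟨hx', hyzt.1⟩)
          · have hxzt := (keyA ⟨a.val, halt⟩ ha0 han).mpr ha'
            exact card_xyz_inter_left hxz hxzt.1 hxzt.2
              (fun hy' => hnxy' ⟨hxzt.1, hy'⟩)
    -- (mid, mid)
    · have halt : a.val < m+4 := by omega
      have hblt : b.val < m+4 := by omega
      have han : a.val ≠ m+3 := by omega
      have hbn : b.val ≠ m+3 := by omega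
      have himga := image_preTri (hnone ⟨a.val, halt⟩ ha0 han)
      have himgb := image_preTri (hnone ⟨b.val, hblt⟩ hb0 hbn)
      have hCiff : (cycleGraph (m+4)).Adj ⟨a.val, halt⟩ ⟨b.val, hblt⟩ ↔
          (triangleGraph G').Adj (ψ.symm ⟨a.val, halt⟩) (ψ.symm ⟨b.val, hblt⟩) :=
        ψ.symm.map_rel_iff.symm
      constructor
      · rintro ⟨hne, hcard⟩
        rw [hgval, hgval, glue1_mid ha0 halt, glue1_mid hb0 hblt] at hcard
        simp only [hF] at hcard
        have hcard2 : ((ψ.symm ⟨a.val, halt⟩).1 ∩ (ψ.symm ⟨b.val, hblt⟩).1).card = 2 := by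
          rw [← himga, ← himgb, card_inter_image]
          exact hcard
        have htt : ψ.symm ⟨a.val, halt⟩ ≠ ψ.symm ⟨b.val, hblt⟩ := by
          intro h
          apply hne
          apply Subtype.ext
          rw [hgval, hgval, glue1_mid ha0 halt, glue1_mid hb0 hblt]
          simp only [hF]
          rw [congrArg Subtype.val h]
        have hC := hCiff.mpr ⟨htt, hcard2⟩
        rw [cycAdj] at hC
        simp only [] at hC
        omega
      · intro h
        have hC : (cycleGraph (m+4)).Adj ⟨a.val, halt⟩ ⟨b.val, hblt⟩ := by
          rw [cycAdj]
          simp only []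
          omega
        obtain ⟨hne', hcard'⟩ := (triangleGraph_adj _ _ _).mp (hCiff.mp hC)
        refine ⟨?_, ?_⟩
        · intro hfe
          apply hne'
          apply Subtype.ext
          have h1 : glue1 m {x,y,z} F a = glue1 m {x,y,z} F b := congrArg Subtype.val hfe
          rw [glue1_mid ha0 halt, glue1_mid hb0 hblt] at h1
          simp only [hF] at h1
          have := congrArg (Finset.image some) h1
          rwa [himga, himgb] at this
        · rw [hgval, hgval, glue1_mid ha0 halt, glue1_mid hb0 hblt]
          simp only [hF]
          have := hcard'
          rw [← himga, ← himgb, card_inter_image] at this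
          exact this
  exact ⟨RelIso.symm (⟨Equiv.ofBijective g ⟨hinj, hsurj⟩, hadj _ _⟩ :
    cycleGraph (m+3) ≃g triangleGraph G)⟩

end ESplit

/-- Edge splitting: if `e = xy` lies in exactly one triangle `xyz`, while `xz` and
`zy` each lie in more than one triangle, then the triangle graph of the split graph
is a cycle iff that of `G` is, and `T(G) ≅ Cₙ ↔ T(G') ≅ C_{n+1}`. -/
theorem triangleGraph_cycle_iff_of_edgeSplitting {V : Type*} [Fintype V] [DecidableEq V]
    (G : SimpleGraph V) (x y z : V)
    (hxy : G.Adj x y) (hT : IsTriangle G {x, y, z})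
    (huniq : triCount G x y = 1)
    (hxz : 2 ≤ triCount G x z) (hzy : 2 ≤ triCount G z y) :
    ((∃ n, 3 ≤ n ∧ Nonempty (triangleGraph G ≃g cycleGraph n)) ↔
      (∃ n, 3 ≤ n ∧ Nonempty (triangleGraph (splitGraph G x y z) ≃g cycleGraph n))) ∧
    (∀ n, 3 ≤ n →
      (Nonempty (triangleGraph G ≃g cycleGraph n) ↔
        Nonempty (triangleGraph (splitGraph G x y z) ≃g cycleGraph (n + 1)))) := by
  have hxyzd := ESplit.distinct3 hT.1
  obtain ⟨hxyd, hxzd, hyzd⟩ := hxyzd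
  have haxz : G.Adj x z := hT.2 x (by simp) z (by simp) hxzd
  have hayz : G.Adj y z := hT.2 y (by simp) z (by simp) hyzd
  have huq := ESplit.uniqTri hT huniq
  constructor
  · constructor
    · rintro ⟨n, hn, ⟨iso⟩⟩
      obtain ⟨m, rfl⟩ : ∃ m, n = m + 3 := ⟨n - 3, by omega⟩
      obtain ⟨iso'⟩ := ESplit.forward hT huniq hxz hzy m iso
      exact ⟨m+4, by omega, ⟨iso'⟩⟩
    · rintro ⟨n, hn, ⟨iso⟩⟩
      obtain ⟨P, hPt, hPx, hPz, hPne⟩ := ESplit.exists_other hxz {x,y,z}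
      obtain ⟨Q, hQt, hQz, hQy, hQne⟩ := ESplit.exists_other hzy {x,y,z}
      have hPy : y ∉ P := fun hy => hPne (huq P hPt hPx hy)
      have hQx : x ∉ Q := fun hx => hQne (huq Q hQt hx hQy)
      set G' := splitGraph G x y z with hG'
      set Av : {s : Finset (Option V) // IsTriangle G' s} :=
        ⟨{none, some x, some z}, ESplit.isTriangle_A hxyd hxzd hyzd haxz⟩ with hAv
      set Bv : {s : Finset (Option V) // IsTriangle G' s} :=
        ⟨{none, some y, some z}, ESplit.isTriangle_B hxyd hxzd hyzd hayz⟩ with hBv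
      set Pv : {s : Finset (Option V) // IsTriangle G' s} :=
        ⟨P.image some, ESplit.isTriangle_image hPt (fun hc => hPy hc.2)⟩ with hPv
      set Qv : {s : Finset (Option V) // IsTriangle G' s} :=
        ⟨Q.image some, ESplit.isTriangle_image hQt (fun hc => hQx hc.1)⟩ with hQv
      have e1 : Av ≠ Bv := fun h => ESplit.AB_ne hxyd hyzd (congrArg Subtype.val h).symm
      have e2 : Av ≠ Pv := fun h => by
        have hh := congrArg Subtype.val h
        rw [hAv, hPv] at hh
        have hh2 : ({none, some x, some z} : Finset (Option V)) = P.image some := hh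
        have hmem : (none : Option V) ∈ P.image some := hh2 ▸
          (show (none : Option V) ∈ ({none, some x, some z} : Finset (Option V)) by simp)
        simp at hmem
      have e3 : Av ≠ Qv := fun h => by
        have hh := congrArg Subtype.val h
        rw [hAv, hQv] at hh
        have hh2 : ({none, some x, some z} : Finset (Option V)) = Q.image some := hh
        have hmem : (none : Option V) ∈ Q.image some := hh2 ▸
          (show (none : Option V) ∈ ({none, some x, some z} : Finset (Option V)) by simp)
        simp at hmem
      have e4 : Bv ≠ Pv := fun h => by
        have hh := congrArg Subtype.val h
        rw [hBv, hPv] at hh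
        have hh2 : ({none, some y, some z} : Finset (Option V)) = P.image some := hh
        have hmem : (none : Option V) ∈ P.image some := hh2 ▸
          (show (none : Option V) ∈ ({none, some y, some z} : Finset (Option V)) by simp)
        simp at hmem
      have e5 : Bv ≠ Qv := fun h => by
        have hh := congrArg Subtype.val h
        rw [hBv, hQv] at hh
        have hh2 : ({none, some y, some z} : Finset (Option V)) = Q.image some := hh
        have hmem : (none : Option V) ∈ Q.image some := hh2 ▸
          (show (none : Option V) ∈ ({none, some y, some z} : Finset (Option V)) by simp)
        simp at hmem
      have e6 : Pv ≠ Qv := fun h =>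
        hQx ((ESplit.image_some_inj (congrArg Subtype.val h)) ▸ hPx)
      have hcard : ({iso Av, iso Bv, iso Pv, iso Qv} : Finset (Fin n)).card = 4 := by
        rw [Finset.card_insert_of_notMem, Finset.card_insert_of_notMem,
          Finset.card_pair (fun h => e6 (iso.injective h))]
        · simp only [Finset.mem_insert, Finset.mem_singleton]
          push_neg
          exact ⟨fun h => e4 (iso.injective h), fun h => e5 (iso.injective h)⟩
        · simp only [Finset.mem_insert, Finset.mem_singleton]
          push_neg
          exact ⟨fun h => e1 (iso.injective h), fun h => e2 (iso.injective h),
            fun h => e3 (iso.injective h)⟩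
      have hle : ({iso Av, iso Bv, iso Pv, iso Qv} : Finset (Fin n)).card ≤ n := by
        have := Finset.card_le_univ ({iso Av, iso Bv, iso Pv, iso Qv} : Finset (Fin n))
        simpa using this
      rw [hcard] at hle
      obtain ⟨k, rfl⟩ : ∃ k, n = k + 4 := ⟨n - 4, by omega⟩
      obtain ⟨iso'⟩ := ESplit.backward hT huniq k iso
      exact ⟨k+3, by omega, ⟨iso'⟩⟩
  · intro n hn
    obtain ⟨m, rfl⟩ : ∃ m, n = m + 3 := ⟨n - 3, by omega⟩
    constructor
    · rintro ⟨iso⟩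
      exact ESplit.forward hT huniq hxz hzy m iso
    · rintro ⟨iso⟩
      exact ESplit.backward hT huniq m iso
end

section
/- No graph is a minimal forbidden graph for both C_n and C_m when n ≠ m; that is, if G is minimal with the property that T(G) contains an induced n-cycle, then G is not minimal with the property that T(G) contains an induced m-cycle for any m ≠ n. -/
open SimpleGraph

/-- `G` is a minimal forbidden graph for `Cₙ`: its triangle graph contains an
induced `n`-cycle, but the triangle graph of no proper subgraph of `G` does. -/
def MinimalForbiddenFor {V : Type*} [DecidableEq V] (G : SimpleGraph V) (n : ℕ) : Prop :=
  Nonempty (cycleGraph n ↪g triangleGraph G) ∧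
    ∀ H : G.Subgraph, H ≠ ⊤ → IsEmpty (cycleGraph n ↪g triangleGraph H.coe)

section Aux
variable {V : Type*} [DecidableEq V]

lemma inter_card_le_two {s t : Finset V} (hs : s.card = 3) (ht : t.card = 3) (hne : s ≠ t) :
    (s ∩ t).card ≤ 2 := by
  by_contra h
  push_neg at h
  have hle : (s ∩ t).card ≤ 3 := hs ▸ Finset.card_le_card Finset.inter_subset_left
  have h1 : s ∩ t = s := Finset.eq_of_subset_of_card_le Finset.inter_subset_left (by omega)
  have h2 : s ∩ t = t := Finset.eq_of_subset_of_card_le Finset.inter_subset_right (by omega)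
  exact hne (h1.symm.trans h2)

def triEdges (t : Finset V) : Finset (Sym2 V) := t.sym2.filter fun e => ¬ e.IsDiag

lemma mem_triEdges {t : Finset V} {u v : V} :
    s(u, v) ∈ triEdges t ↔ u ∈ t ∧ v ∈ t ∧ u ≠ v := by
  simp [triEdges, Finset.mk_mem_sym2_iff, and_assoc]

lemma exists_rep (e : Sym2 V) : ∃ u v, e = s(u, v) :=
  Sym2.inductionOn e fun u v => ⟨u, v, rfl⟩

lemma triEdges_card {t : Finset V} (ht : t.card = 3) : (triEdges t).card = 3 := by
  obtain ⟨a, b, c, hab, hac, hbc, rfl⟩ := Finset.card_eq_three.mp ht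
  have he : triEdges ({a, b, c} : Finset V) = {s(a, b), s(a, c), s(b, c)} := by
    ext e
    refine Sym2.inductionOn e fun u v => ?_
    simp only [mem_triEdges, Finset.mem_insert, Finset.mem_singleton, Sym2.eq_iff]
    constructor
    · rintro ⟨(rfl | rfl | rfl), (rfl | rfl | rfl), hne⟩ <;> tauto
    · rintro ((⟨rfl, rfl⟩ | ⟨rfl, rfl⟩) | (⟨rfl, rfl⟩ | ⟨rfl, rfl⟩) | (⟨rfl, rfl⟩ | ⟨rfl, rfl⟩)) <;>
        exact ⟨by tauto, by tauto, by tauto⟩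
  rw [he]
  rw [Finset.card_insert_of_notMem (by simp [Sym2.eq_iff]; tauto),
    Finset.card_insert_of_notMem (by simp [Sym2.eq_iff]; tauto), Finset.card_singleton]

lemma triangleGraph_adj {G : SimpleGraph V} {s t : {t : Finset V // IsTriangle G t}} :
    (triangleGraph G).Adj s t ↔ s ≠ t ∧ ((s : Finset V) ∩ (t : Finset V)).card = 2 := Iff.rfl

open Fin.CommRing in
lemma no_three_clique {p : ℕ} {i j k : Fin (p + 4)} (hij : (cycleGraph (p + 4)).Adj i j)
    (hik : (cycleGraph (p + 4)).Adj i k) (hjk : (cycleGraph (p + 4)).Adj j k) : False := by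
  have hone : ((1 : Fin (p + 4))) ≠ 0 := by
    simp [Fin.ext_iff]
  have hthree : ((3 : Fin (p + 4))) ≠ 0 := by
    intro h
    rw [Fin.ext_iff, Fin.coe_ofNat_eq_mod, Fin.val_zero, Nat.mod_eq_of_lt (by omega)] at h
    omega
  have hij' := (cycleGraph_adj (n := p + 2)).mp hij
  have hik' := (cycleGraph_adj (n := p + 2)).mp hik
  have hjk' := (cycleGraph_adj (n := p + 2)).mp hjk
  rcases hij' with h1 | h1 <;> rcases hik' with h2 | h2 <;> rcases hjk' with h3 | h3 <;>
    first
      | exact hone (by linear_combination h1 + h2 + h3)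
      | exact hone (by linear_combination h1 + h2 - h3)
      | exact hone (by linear_combination h1 - h2 + h3)
      | exact hone (by linear_combination h1 - h2 - h3)
      | exact hone (by linear_combination -h1 + h2 + h3)
      | exact hone (by linear_combination -h1 + h2 - h3)
      | exact hone (by linear_combination -h1 - h2 + h3)
      | exact hone (by linear_combination -h1 - h2 - h3)
      | exact hthree (by linear_combination h1 + h2 + h3)
      | exact hthree (by linear_combination h1 + h2 - h3)
      | exact hthree (by linear_combination h1 - h2 + h3)
      | exact hthree (by linear_combination h1 - h2 - h3)
      | exact hthree (by linear_combination -h1 + h2 + h3)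
      | exact hthree (by linear_combination -h1 + h2 - h3)
      | exact hthree (by linear_combination -h1 - h2 + h3)
      | exact hthree (by linear_combination -h1 - h2 - h3)

end Aux

section Core
variable {V : Type*} [Fintype V] [DecidableEq V] {G : SimpleGraph V} [Fintype G.edgeSet]
  {n : ℕ}

lemma fin_val_one_of (hn : 3 ≤ n) [NeZero n] : (1 : Fin n).val = 1 := by
  rw [Fin.val_one', Nat.mod_eq_of_lt (by omega)]

def Sf (f : cycleGraph n ↪g triangleGraph G) (i : Fin n) : Finset (Sym2 V) :=
  triEdges ((f i : Finset V))

lemma mem_Sf {f : cycleGraph n ↪g triangleGraph G} {i : Fin n} {u v : V} :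
    s(u, v) ∈ Sf f i ↔ u ∈ (f i : Finset V) ∧ v ∈ (f i : Finset V) ∧ u ≠ v :=
  mem_triEdges

lemma Sf_subset (f : cycleGraph n ↪g triangleGraph G) (i : Fin n) :
    Sf f i ⊆ G.edgeFinset := by
  intro e he
  obtain ⟨u, v, rfl⟩ := exists_rep e
  rw [mem_Sf] at he
  rw [mem_edgeFinset, mem_edgeSet]
  exact (f i).2.2 u he.1 v he.2.1 he.2.2

lemma adj_of_mem_Sf (f : cycleGraph n ↪g triangleGraph G) {i j : Fin n} (hij : i ≠ j)
    {e : Sym2 V} (hi : e ∈ Sf f i) (hj : e ∈ Sf f j) : (cycleGraph n).Adj i j := by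
  have hfij : f i ≠ f j := fun h => hij (f.injective h)
  refine f.map_adj_iff.mp ?_
  refine triangleGraph_adj.mpr ⟨hfij, ?_⟩
  obtain ⟨u, v, rfl⟩ := exists_rep e
  · rw [mem_Sf] at hi hj
    have hsub : ({u, v} : Finset V) ⊆ (f i : Finset V) ∩ (f j : Finset V) := by
      intro x hx
      rcases Finset.mem_insert.mp hx with rfl | hx
      · exact Finset.mem_inter.mpr ⟨hi.1, hj.1⟩
      · rw [Finset.mem_singleton] at hx
        subst hx
        exact Finset.mem_inter.mpr ⟨hi.2.1, hj.2.1⟩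
    have h2 : 2 ≤ ((f i : Finset V) ∩ (f j : Finset V)).card := by
      calc 2 = ({u, v} : Finset V).card := (Finset.card_pair hi.2.2).symm
        _ ≤ _ := Finset.card_le_card hsub
    exact le_antisymm
      (inter_card_le_two (f i).2.1 (f j).2.1 fun h => hfij (Subtype.ext h)) h2

lemma inter_card_succ (f : cycleGraph n ↪g triangleGraph G) (hn : 3 ≤ n) [NeZero n]
    (i : Fin n) : ((f i : Finset V) ∩ (f (i + 1) : Finset V)).card = 2 := by
  have hadj : (cycleGraph n).Adj i (i + 1) := by
    rw [cycleGraph_adj']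
    right
    rw [add_sub_cancel_left]
    exact fin_val_one_of hn
  exact (triangleGraph_adj.mp (f.map_adj_iff.mpr hadj)).2

lemma ne_add_one (hn : 3 ≤ n) [NeZero n] (i : Fin n) : i ≠ i + 1 := by
  intro h
  have h1 : (1 : Fin n) = 0 := (left_eq_add.mp h)
  have := congrArg Fin.val h1
  rw [fin_val_one_of hn, Fin.val_zero] at this
  omega

lemma shared_exists (f : cycleGraph n ↪g triangleGraph G) (hn : 3 ≤ n) [NeZero n] (i : Fin n) :
    ∃ e, e ∈ Sf f i ∧ e ∈ Sf f (i + 1) := by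
  obtain ⟨a, b, hab, hI⟩ := Finset.card_eq_two.mp (inter_card_succ f hn i)
  have ha : a ∈ (f i : Finset V) ∩ (f (i + 1) : Finset V) := by rw [hI]; simp
  have hb : b ∈ (f i : Finset V) ∩ (f (i + 1) : Finset V) := by rw [hI]; simp
  exact ⟨s(a, b),
    mem_Sf.mpr ⟨(Finset.mem_inter.mp ha).1, (Finset.mem_inter.mp hb).1, hab⟩,
    mem_Sf.mpr ⟨(Finset.mem_inter.mp ha).2, (Finset.mem_inter.mp hb).2, hab⟩⟩

lemma shared_unique (f : cycleGraph n ↪g triangleGraph G) (hn : 3 ≤ n) [NeZero n] (i : Fin n)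
    {e e' : Sym2 V} (he1 : e ∈ Sf f i) (he2 : e ∈ Sf f (i + 1))
    (he1' : e' ∈ Sf f i) (he2' : e' ∈ Sf f (i + 1)) : e = e' := by
  obtain ⟨a, b, hab, hI⟩ := Finset.card_eq_two.mp (inter_card_succ f hn i)
  have key : ∀ d : Sym2 V, d ∈ Sf f i → d ∈ Sf f (i + 1) → d = s(a, b) := by
    intro d hd1 hd2
    obtain ⟨u, v, rfl⟩ := exists_rep d
    · rw [mem_Sf] at hd1 hd2
      have hu : u ∈ ({a, b} : Finset V) := by
        rw [← hI]; exact Finset.mem_inter.mpr ⟨hd1.1, hd2.1⟩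
      have hv : v ∈ ({a, b} : Finset V) := by
        rw [← hI]; exact Finset.mem_inter.mpr ⟨hd1.2.1, hd2.2.1⟩
      have huv : u ≠ v := hd1.2.2
      simp only [Finset.mem_insert, Finset.mem_singleton] at hu hv
      rw [Sym2.eq_iff]
      rcases hu with rfl | rfl <;> rcases hv with rfl | rfl <;> tauto
  rw [key e he1 he2, key e' he1' he2']

lemma triangle_covered
    (hmin : ∀ H : G.Subgraph, H ≠ ⊤ → IsEmpty (cycleGraph n ↪g triangleGraph H.coe))
    (f : cycleGraph n ↪g triangleGraph G) {u v : V} (huv : G.Adj u v) :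
    ∃ i, u ∈ ((f i : Finset V)) ∧ v ∈ ((f i : Finset V)) := by
  classical
  set H : G.Subgraph :=
    { verts := Set.univ
      Adj := fun a b => a ≠ b ∧ ∃ i, a ∈ ((f i : Finset V)) ∧ b ∈ ((f i : Finset V))
      adj_sub := by
        rintro a b ⟨hne, i, ha, hb⟩
        exact (f i).2.2 a ha b hb hne
      edge_vert := fun _ => Set.mem_univ _
      symm := by
        constructor
        rintro a b ⟨hne, i, ha, hb⟩
        exact ⟨hne.symm, i, hb, ha⟩ } with hHdef
  by_cases hH : H = ⊤
  · have : H.Adj u v := by rw [hH]; exact huv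
    exact this.2
  · exfalso
    let ι : V ↪ H.verts := ⟨fun x => ⟨x, Set.mem_univ x⟩, fun a b h => congrArg Subtype.val h⟩
    have htri : ∀ i : Fin n, IsTriangle H.coe (((f i : Finset V)).map ι) := by
      intro i
      constructor
      · rw [Finset.card_map]; exact (f i).2.1
      · intro x hx y hy hxy
        obtain ⟨a, ha, rfl⟩ := Finset.mem_map.mp hx
        obtain ⟨b, hb, rfl⟩ := Finset.mem_map.mp hy
        have hab : a ≠ b := fun h => hxy (by rw [h])
        exact ⟨hab, i, ha, hb⟩
    let F : Fin n → {t : Finset H.verts // IsTriangle H.coe t} :=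
      fun i => ⟨((f i : Finset V)).map ι, htri i⟩
    have hFne : ∀ i j, F i ≠ F j ↔ f i ≠ f j := by
      intro i j
      constructor
      · intro h hfij
        exact h (by simp only [F, hfij])
      · intro h hFij
        apply h
        apply Subtype.ext
        exact Finset.map_injective ι (congrArg Subtype.val hFij)
    have hFadj : ∀ i j, (triangleGraph H.coe).Adj (F i) (F j) ↔ (triangleGraph G).Adj (f i) (f j) := by
      intro i j
      rw [triangleGraph_adj, triangleGraph_adj]
      rw [hFne]
      constructor
      · rintro ⟨h1, h2⟩
        refine ⟨h1, ?_⟩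
        rwa [show ((F i : Finset H.verts)) ∩ ((F j : Finset H.verts))
            = (((f i : Finset V)) ∩ ((f j : Finset V))).map ι from (Finset.map_inter _ _).symm,
          Finset.card_map] at h2
      · rintro ⟨h1, h2⟩
        refine ⟨h1, ?_⟩
        rw [show ((F i : Finset H.verts)) ∩ ((F j : Finset H.verts))
            = (((f i : Finset V)) ∩ ((f j : Finset V))).map ι from (Finset.map_inter _ _).symm,
          Finset.card_map]
        exact h2
    have hemb : cycleGraph n ↪g triangleGraph H.coe :=
      { toFun := F
        inj' := by
          intro i j h
          apply f.injective
          by_contra hne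
          exact ((hFne i j).mpr hne) h
        map_rel_iff' := by
          intro i j
          exact (hFadj _ _).trans f.map_adj_iff }
    exact (hmin H hH).false hemb




variable {V : Type*} [Fintype V] [DecidableEq V] {G : SimpleGraph V} [Fintype G.edgeSet]
  {n : ℕ}

/-- The number of cycle triangles whose edge set contains `e`. -/
def cE (f : cycleGraph n ↪g triangleGraph G) (e : Sym2 V) : ℕ :=
  (Finset.univ.filter fun i => e ∈ Sf f i).card

lemma sum_cE (f : cycleGraph n ↪g triangleGraph G) :
    ∑ e ∈ G.edgeFinset, cE f e = 3 * n := by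
  have hfilter : ∀ i, (G.edgeFinset.filter fun e => e ∈ Sf f i) = Sf f i := by
    intro i
    apply Finset.Subset.antisymm
    · intro e he; exact (Finset.mem_filter.mp he).2
    · intro e he; exact Finset.mem_filter.mpr ⟨Sf_subset f i he, he⟩
  calc ∑ e ∈ G.edgeFinset, cE f e
      = ∑ e ∈ G.edgeFinset, ∑ i : Fin n, if e ∈ Sf f i then 1 else 0 := by
        refine Finset.sum_congr rfl fun e _ => ?_
        exact Finset.card_filter _ _
    _ = ∑ i : Fin n, ∑ e ∈ G.edgeFinset, if e ∈ Sf f i then 1 else 0 := Finset.sum_comm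
    _ = ∑ i : Fin n, (Sf f i).card := by
        refine Finset.sum_congr rfl fun i _ => ?_
        rw [← Finset.card_filter, hfilter]
    _ = ∑ i : Fin n, 3 := Finset.sum_congr rfl fun i _ => triEdges_card (f i).2.1
    _ = 3 * n := by simp [Finset.sum_const, Finset.card_univ, mul_comm]

lemma one_le_cE (f : cycleGraph n ↪g triangleGraph G)
    (hmin : ∀ H : G.Subgraph, H ≠ ⊤ → IsEmpty (cycleGraph n ↪g triangleGraph H.coe))
    {e : Sym2 V} (he : e ∈ G.edgeFinset) : 1 ≤ cE f e := by
  obtain ⟨u, v, rfl⟩ := exists_rep e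
  rw [mem_edgeFinset, mem_edgeSet] at he
  obtain ⟨i, hu, hv⟩ := triangle_covered hmin f he
  exact Finset.card_pos.mpr
    ⟨i, Finset.mem_filter.mpr ⟨Finset.mem_univ i, mem_Sf.mpr ⟨hu, hv, he.ne⟩⟩⟩

lemma cE_le_two {p : ℕ} (f : cycleGraph (p + 4) ↪g triangleGraph G) (e : Sym2 V) :
    cE f e ≤ 2 := by
  by_contra h
  push_neg at h
  obtain ⟨i, j, k, hi, hj, hk, hij, hik, hjk⟩ := Finset.two_lt_card_iff.mp h
  rw [Finset.mem_filter] at hi hj hk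
  exact no_three_clique (adj_of_mem_Sf f hij hi.2 hj.2)
    (adj_of_mem_Sf f hik hi.2 hk.2) (adj_of_mem_Sf f hjk hj.2 hk.2)

open Fin.CommRing in
lemma key_ge4 {p : ℕ} (f : cycleGraph (p + 4) ↪g triangleGraph G)
    (hmin : ∀ H : G.Subgraph, H ≠ ⊤ → IsEmpty (cycleGraph (p + 4) ↪g triangleGraph H.coe)) :
    G.edgeFinset.card = 2 * (p + 4) := by
  classical
  haveI : NeZero (p + 4) := ⟨by omega⟩
  have hn3 : 3 ≤ p + 4 := by omega
  choose φ hφ1 hφ2 using fun i => shared_exists f hn3 i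
  have hpairsub : ∀ i : Fin (p + 4),
      ({i, i + 1} : Finset (Fin (p + 4))) ⊆ Finset.univ.filter fun j => φ i ∈ Sf f j := by
    intro i x hx
    rcases Finset.mem_insert.mp hx with h1 | hx
    · subst h1
      exact Finset.mem_filter.mpr ⟨Finset.mem_univ _, hφ1 _⟩
    · rw [Finset.mem_singleton] at hx
      subst hx
      exact Finset.mem_filter.mpr ⟨Finset.mem_univ _, hφ2 _⟩
  have hφ2le : ∀ i : Fin (p + 4), 2 ≤ cE f (φ i) := by
    intro i
    calc 2 = ({i, i + 1} : Finset (Fin (p + 4))).card :=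
          (Finset.card_pair (ne_add_one hn3 i)).symm
      _ ≤ _ := Finset.card_le_card (hpairsub i)
  set D : Finset (Sym2 V) := G.edgeFinset.filter (fun e => 2 ≤ cE f e) with hDdef
  have hφD : ∀ i, φ i ∈ D := fun i =>
    Finset.mem_filter.mpr ⟨Sf_subset f i (hφ1 i), hφ2le i⟩
  have hD : D = Finset.image φ Finset.univ := by
    ext e
    simp only [Finset.mem_image, Finset.mem_univ, true_and]
    constructor
    · intro he
      have h2 : 1 < cE f e := (Finset.mem_filter.mp he).2
      obtain ⟨i, hi, j, hj, hij⟩ := Finset.one_lt_card.mp h2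
      rw [Finset.mem_filter] at hi hj
      have hadj := adj_of_mem_Sf f hij hi.2 hj.2
      rcases (cycleGraph_adj (n := p + 2)).mp hadj with h | h
      · -- h : i - j = 1  means  i = j + 1
        have hji : i = j + 1 := by
          rw [sub_eq_iff_eq_add] at h
          rw [h]; exact add_comm 1 j
        have h' : e ∈ Sf f (j + 1) := hji ▸ hi.2
        exact ⟨j, shared_unique f hn3 j (hφ1 j) (hφ2 j) hj.2 h'⟩
      · have hji : j = i + 1 := by
          rw [sub_eq_iff_eq_add] at h
          rw [h]; exact add_comm 1 i
        have h' : e ∈ Sf f (i + 1) := hji ▸ hj.2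
        exact ⟨i, shared_unique f hn3 i (hφ1 i) (hφ2 i) hi.2 h'⟩
    · rintro ⟨i, rfl⟩
      exact hφD i
  have hφinj : Function.Injective φ := by
    intro i j hphi
    by_contra hij
    set T : Finset (Fin (p + 4)) := Finset.univ.filter fun k => φ i ∈ Sf f k with hTdef
    have hTcard : T.card ≤ 2 := cE_le_two f (φ i)
    have hTeq : T = {i, i + 1} :=
      (Finset.eq_of_subset_of_card_le (hpairsub i)
        (le_trans hTcard (Finset.card_pair (ne_add_one hn3 i)).symm.le)).symm
    have hjT : j ∈ T := Finset.mem_filter.mpr ⟨Finset.mem_univ _, hphi ▸ hφ1 j⟩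
    have hj1T : j + 1 ∈ T := Finset.mem_filter.mpr ⟨Finset.mem_univ _, hphi ▸ hφ2 j⟩
    rw [hTeq] at hjT hj1T
    rcases Finset.mem_insert.mp hjT with rfl | hjT'
    · exact hij rfl
    · rw [Finset.mem_singleton] at hjT'
      subst hjT'
      rcases Finset.mem_insert.mp hj1T with h' | h'
      · -- i + 1 + 1 = i
        have h2 : (2 : Fin (p + 4)) = 0 := by
          have h2' : i = i + 2 := by
            conv_lhs => rw [← h']
            ring
          exact (left_eq_add.mp h2')
        have := congrArg Fin.val h2
        rw [Fin.coe_ofNat_eq_mod, Fin.val_zero, Nat.mod_eq_of_lt (by omega)] at this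
        omega
      · rw [Finset.mem_singleton] at h'
        exact (ne_add_one hn3 (i + 1)) h'.symm
  have hDcard : D.card = p + 4 := by
    rw [hD, Finset.card_image_of_injective _ hφinj, Finset.card_univ, Fintype.card_fin]
  -- split the sum
  have hDsum : ∑ e ∈ D, cE f e = 2 * D.card := by
    have h2 : ∀ e ∈ D, cE f e = 2 := fun e he =>
      le_antisymm (cE_le_two f e) (Finset.mem_filter.mp he).2
    rw [Finset.sum_congr rfl h2, Finset.sum_const, smul_eq_mul, mul_comm]
  have hN : ∑ e ∈ G.edgeFinset.filter (fun e => ¬ 2 ≤ cE f e), cE f e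
      = (G.edgeFinset.filter (fun e => ¬ 2 ≤ cE f e)).card := by
    have h1 : ∀ e ∈ G.edgeFinset.filter (fun e => ¬ 2 ≤ cE f e), cE f e = 1 := by
      intro e he
      have ha := one_le_cE f hmin (Finset.mem_filter.mp he).1
      have hb := (Finset.mem_filter.mp he).2
      omega
    rw [Finset.sum_congr rfl h1, Finset.sum_const, smul_eq_mul, mul_one]
  have hsplit := Finset.sum_filter_add_sum_filter_not G.edgeFinset (fun e => 2 ≤ cE f e) (cE f)
  have hcards := Finset.card_filter_add_card_filter_not
    (s := G.edgeFinset) (fun e => 2 ≤ cE f e)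
  beta_reduce at hsplit hcards
  rw [← hDdef] at hsplit hcards
  rw [hDsum, hN, hDcard, sum_cE f] at hsplit
  rw [hDcard] at hcards
  omega

lemma key_three (f : cycleGraph 3 ↪g triangleGraph G)
    (hmin : ∀ H : G.Subgraph, H ≠ ⊤ → IsEmpty (cycleGraph 3 ↪g triangleGraph H.coe)) :
    G.edgeFinset.card ≤ 7 := by
  classical
  have hn3 : 3 ≤ 3 := le_refl 3
  choose φ hφ1 hφ2 using fun i => shared_exists f hn3 i
  have h01 : (0 : Fin 3) + 1 = 1 := by decide
  have h12 : (1 : Fin 3) + 1 = 2 := by decide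
  have he0S1 : φ 0 ∈ Sf f 1 := by rw [← h01]; exact hφ2 0
  have he1S2 : φ 1 ∈ Sf f 2 := by rw [← h12]; exact hφ2 1
  have htotal := sum_cE f
  have hmemE : ∀ i, φ i ∈ G.edgeFinset := fun i => Sf_subset f i (hφ1 i)
  by_cases heq : φ 0 = φ 1
  · -- one edge in all three triangles
    have h3 : 3 ≤ cE f (φ 0) := by
      have hsub : ({0, 1, 2} : Finset (Fin 3)) ⊆ Finset.univ.filter fun j => φ 0 ∈ Sf f j := by
        intro x hx
        fin_cases hx
        · exact Finset.mem_filter.mpr ⟨Finset.mem_univ _, hφ1 0⟩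
        · exact Finset.mem_filter.mpr ⟨Finset.mem_univ _, he0S1⟩
        · exact Finset.mem_filter.mpr ⟨Finset.mem_univ _, heq ▸ he1S2⟩
      calc 3 = ({0, 1, 2} : Finset (Fin 3)).card := by decide
        _ ≤ _ := Finset.card_le_card hsub
    have hle : ∑ e ∈ G.edgeFinset, (1 + if e = φ 0 then 2 else 0)
        ≤ ∑ e ∈ G.edgeFinset, cE f e := by
      refine Finset.sum_le_sum fun e he => ?_
      by_cases h : e = φ 0
      · subst h
        rw [if_pos rfl]
        omega
      · rw [if_neg h]
        have := one_le_cE f hmin he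
        omega
    rw [Finset.sum_add_distrib, Finset.sum_const, smul_eq_mul, mul_one,
      Finset.sum_ite_eq' G.edgeFinset (φ 0) (fun _ => 2), if_pos (hmemE 0), htotal] at hle
    omega
  · -- two distinct doubled edges
    have h20 : 2 ≤ cE f (φ 0) := by
      have hsub : ({0, 1} : Finset (Fin 3)) ⊆ Finset.univ.filter fun j => φ 0 ∈ Sf f j := by
        intro x hx
        fin_cases hx
        · exact Finset.mem_filter.mpr ⟨Finset.mem_univ _, hφ1 0⟩
        · exact Finset.mem_filter.mpr ⟨Finset.mem_univ _, he0S1⟩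
      calc 2 = ({0, 1} : Finset (Fin 3)).card := by decide
        _ ≤ _ := Finset.card_le_card hsub
    have h21 : 2 ≤ cE f (φ 1) := by
      have hsub : ({1, 2} : Finset (Fin 3)) ⊆ Finset.univ.filter fun j => φ 1 ∈ Sf f j := by
        intro x hx
        fin_cases hx
        · exact Finset.mem_filter.mpr ⟨Finset.mem_univ _, hφ1 1⟩
        · exact Finset.mem_filter.mpr ⟨Finset.mem_univ _, he1S2⟩
      calc 2 = ({1, 2} : Finset (Fin 3)).card := by decide
        _ ≤ _ := Finset.card_le_card hsub
    have hle : ∑ e ∈ G.edgeFinset, (1 + ((if e = φ 0 then 1 else 0) + if e = φ 1 then 1 else 0))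
        ≤ ∑ e ∈ G.edgeFinset, cE f e := by
      refine Finset.sum_le_sum fun e he => ?_
      by_cases h0 : e = φ 0
      · subst h0
        rw [if_pos rfl, if_neg heq]
        omega
      · by_cases h1 : e = φ 1
        · subst h1
          rw [if_neg h0, if_pos rfl]
          omega
        · rw [if_neg h0, if_neg h1]
          have := one_le_cE f hmin he
          omega
    rw [Finset.sum_add_distrib, Finset.sum_const, smul_eq_mul, mul_one,
      Finset.sum_add_distrib,
      Finset.sum_ite_eq' G.edgeFinset (φ 0) (fun _ => 1), if_pos (hmemE 0),
      Finset.sum_ite_eq' G.edgeFinset (φ 1) (fun _ => 1), if_pos (hmemE 1), htotal] at hle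
    omega




end Core

/-- No graph is a minimal forbidden graph for both `Cₙ` and `Cₘ` when `n ≠ m`. -/
theorem not_minimal_forbidden_two_lengths {V : Type*} [Fintype V] [DecidableEq V]
    (G : SimpleGraph V) (n m : ℕ) (hn : 3 ≤ n) (hm : 3 ≤ m) (hnm : n ≠ m) :
    ¬(MinimalForbiddenFor G n ∧ MinimalForbiddenFor G m) := by
  classical
  rintro ⟨⟨⟨fn⟩, hn'⟩, ⟨⟨fm⟩, hm'⟩⟩
  rcases Nat.lt_or_ge n 4 with h4 | h4
  · -- n = 3
    have hn3 : n = 3 := by omega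
    subst hn3
    rcases Nat.lt_or_ge m 4 with hm4 | hm4
    · exact hnm (by omega)
    · obtain ⟨p, rfl⟩ : ∃ p, m = p + 4 := ⟨m - 4, by omega⟩
      have h1 := key_three fn hn'
      have h2 := key_ge4 fm hm'
      omega
  · obtain ⟨p, rfl⟩ : ∃ p, n = p + 4 := ⟨n - 4, by omega⟩
    have h1 := key_ge4 fn hn'
    rcases Nat.lt_or_ge m 4 with hm4 | hm4
    · have hm3 : m = 3 := by omega
      subst hm3
      have h2 := key_three fm hm'
      omega
    · obtain ⟨q, rfl⟩ : ∃ q, m = q + 4 := ⟨m - 4, by omega⟩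
      have h2 := key_ge4 fm hm'
      omega
end

section
/- The triangle graph T(G) of a graph G contains an induced 5-cycle if and only if G contains a subgraph isomorphic to the wheel W_5 = K_1 ∨ C_5 or to K_5. -/
open SimpleGraph

/-! ### Auxiliary material -/

instance : DecidableRel (wheel 5).Adj := fun a b =>
  decidable_of_iff' _ (SimpleGraph.fromRel_adj _ a b)

/-- Two distinct 2-element subsets of a 3-element set meet in exactly one element. -/
private lemma two_subsets_card {V : Type*} [DecidableEq V] {t a b : Finset V}
    (ht : t.card = 3) (ha : a ⊆ t) (hb : b ⊆ t) (ha2 : a.card = 2) (hb2 : b.card = 2)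
    (hne : a ≠ b) : (a ∩ b).card = 1 := by
  have hu : (a ∪ b).card ≤ 3 := ht ▸ Finset.card_le_card (Finset.union_subset ha hb)
  have hi := Finset.card_inter_add_card_union a b
  have h2 : (a ∩ b).card ≤ 2 := ha2 ▸ Finset.card_le_card Finset.inter_subset_left
  have hn2 : (a ∩ b).card ≠ 2 := by
    intro h
    apply hne
    have h1 : a ∩ b = a :=
      Finset.eq_of_subset_of_card_le Finset.inter_subset_left (by omega)
    exact Finset.eq_of_subset_of_card_le (h1 ▸ Finset.inter_subset_right) (by omega)
  omega

/-- Generic construction of an induced 5-cycle in the triangle graph from a family of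
five vertex sets. -/
private lemma build_embedding {V W : Type*} [DecidableEq V] [DecidableEq W]
    {G : SimpleGraph V} (f : W → V) (hf : Function.Injective f)
    (s : Fin 5 → Finset W)
    (htri : ∀ i, IsTriangle G ((s i).image f))
    (hiff : ∀ i j, (cycleGraph 5).Adj i j ↔ (s i ≠ s j ∧ (s i ∩ s j).card = 2))
    (hinj : Function.Injective s) :
    Nonempty (cycleGraph 5 ↪g triangleGraph G) := by
  refine ⟨⟨⟨fun i => ⟨(s i).image f, htri i⟩, ?_⟩, ?_⟩⟩
  · intro i j hij
    simp only [Subtype.mk.injEq] at hij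
    exact hinj (Finset.image_injective hf hij)
  · intro i j
    show ((⟨(s i).image f, htri i⟩ : {t : Finset V // IsTriangle G t}) ≠ ⟨(s j).image f, htri j⟩ ∧
        ((s i).image f ∩ (s j).image f).card = 2) ↔ (cycleGraph 5).Adj i j
    have himg : (s i).image f = (s j).image f ↔ s i = s j :=
      ⟨fun h => Finset.image_injective hf h, fun h => by rw [h]⟩
    rw [← Finset.image_inter _ _ hf, Finset.card_image_of_injective _ hf, Ne,
      Subtype.mk.injEq, himg, hiff i j]

private def wheelTri (i : Fin 5) : Finset (Option (Fin 5)) := {none, some i, some (i+1)}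
private def k5Tri (i : Fin 5) : Finset (Fin 5) := {i, i+1, i+2}

private lemma wheel_case {V : Type*} [DecidableEq V] {G : SimpleGraph V}
    (h : HasSubgraphIso (wheel 5) G) : Nonempty (cycleGraph 5 ↪g triangleGraph G) := by
  obtain ⟨f, hf⟩ := h
  apply build_embedding f hf wheelTri
  · intro i
    refine ⟨?_, ?_⟩
    · rw [Finset.card_image_of_injective _ hf]
      revert i; decide
    · intro u hu v hv huv
      simp only [Finset.mem_image] at hu hv
      obtain ⟨a, ha, rfl⟩ := hu
      obtain ⟨b, hb, rfl⟩ := hv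
      have hab : a ≠ b := fun h => huv (by rw [h])
      have hpair : ∀ (i : Fin 5), ∀ a ∈ wheelTri i, ∀ b ∈ wheelTri i, a ≠ b →
          (wheel 5).Adj a b := by decide
      exact f.map_adj (hpair i a ha b hb hab)
  · decide
  · decide

private lemma k5_case {V : Type*} [DecidableEq V] {G : SimpleGraph V}
    (h : HasSubgraphIso (completeGraph (Fin 5)) G) :
    Nonempty (cycleGraph 5 ↪g triangleGraph G) := by
  obtain ⟨f, hf⟩ := h
  apply build_embedding f hf k5Tri
  · intro i
    refine ⟨?_, ?_⟩
    · rw [Finset.card_image_of_injective _ hf]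
      revert i; decide
    · intro u hu v hv huv
      simp only [Finset.mem_image] at hu hv
      obtain ⟨a, ha, rfl⟩ := hu
      obtain ⟨b, hb, rfl⟩ := hv
      have hab : a ≠ b := fun h => huv (by rw [h])
      exact f.map_adj hab
  · decide
  · decide

private lemma forward_case {V : Type*} [DecidableEq V] {G : SimpleGraph V}
    (φ : cycleGraph 5 ↪g triangleGraph G) :
    HasSubgraphIso (wheel 5) G ∨ HasSubgraphIso (completeGraph (Fin 5)) G := by
  classical
  -- the five triangles
  set T : Fin 5 → Finset V := fun i => (φ i : Finset V) with hTdef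
  have tri : ∀ i, IsTriangle G (T i) := fun i => (φ i).2
  have card3 : ∀ i, (T i).card = 3 := fun i => (tri i).1
  have hTadj : ∀ i j, (cycleGraph 5).Adj i j → (T i ∩ T j).card = 2 :=
    fun i j h => (φ.map_rel_iff.mpr h).2
  have hTne : ∀ {i j : Fin 5}, i ≠ j → T i ≠ T j := by
    intro i j hij h
    exact hij (φ.injective (Subtype.ext h))
  have hnadj : ∀ i j, i ≠ j → ¬(cycleGraph 5).Adj i j → (T i ∩ T j).card ≤ 1 := by
    intro i j hij hna
    have h2 : (T i ∩ T j).card ≠ 2 := by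
      intro h
      exact hna (φ.map_rel_iff.mp ⟨fun he => hij (φ.injective he), h⟩)
    have h3 : (T i ∩ T j).card ≤ 3 := card3 i ▸ Finset.card_le_card Finset.inter_subset_left
    have h4 : (T i ∩ T j).card ≠ 3 := by
      intro h
      apply hTne hij
      have e1 : T i ∩ T j = T i :=
        Finset.eq_of_subset_of_card_le Finset.inter_subset_left (by rw [h, card3])
      have e2 : T i ∩ T j = T j :=
        Finset.eq_of_subset_of_card_le Finset.inter_subset_right (by rw [h, card3])
      rw [← e1, e2]
    omega
  -- arithmetic facts in Fin 5
  have harith : ∀ i : Fin 5, i+1+1 = i+2 ∧ i+2+1 = i+3 ∧ i+3+1 = i+4 ∧ i+4+1 = i := by decide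
  have dadj1 : ∀ i : Fin 5, (cycleGraph 5).Adj i (i+1) := by decide
  have dna2 : ∀ i : Fin 5, i ≠ i+2 ∧ ¬(cycleGraph 5).Adj i (i+2) := by decide
  have dna3 : ∀ i : Fin 5, i ≠ i+3 ∧ ¬(cycleGraph 5).Adj i (i+3) := by decide
  have dna13 : ∀ i : Fin 5, i+1 ≠ i+3 ∧ ¬(cycleGraph 5).Adj (i+1) (i+3) := by decide
  have dall : ∀ i j : Fin 5, j = i ∨ j = i+1 ∨ j = i+2 ∨ j = i+3 ∨ j = i+4 := by decide
  have dsplitW : ∀ i j : Fin 5, i ≠ j → j = i+1 ∨ i = j+1 ∨ j = i+2 ∨ j = i+3 := by decide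
  have dsplitK : ∀ i j : Fin 5, i ≠ j → j = i+1 ∨ i = j+1 ∨ j = i+2 ∨ i = j+2 := by decide
  have dne1 : ∀ i : Fin 5, i ≠ i+1 := by decide
  have dsucc : ∀ x y : Fin 5, (cycleGraph 5).Adj x y → y = x+1 ∨ x = y+1 := by decide
  -- the five shared edges
  set E : Fin 5 → Finset V := fun i => T i ∩ T (i+1) with hEdef
  have EsubL : ∀ i, E i ⊆ T i := fun i => Finset.inter_subset_left
  have EsubR : ∀ i, E i ⊆ T (i+1) := fun i => Finset.inter_subset_right
  have cardE : ∀ i, (E i).card = 2 := fun i => hTadj i (i+1) (dadj1 i)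
  have hEne : ∀ i, E i ≠ E (i+1) := by
    intro i h
    have hsub : E i ⊆ T i ∩ T (i+2) := by
      intro x hx
      refine Finset.mem_inter.mpr ⟨EsubL i hx, ?_⟩
      have hx2 : x ∈ E (i+1) := h ▸ hx
      have := EsubR (i+1) hx2
      rwa [(harith i).1] at this
    have := Finset.card_le_card hsub
    have h1 := hnadj i (i+2) (dna2 i).1 (dna2 i).2
    have h2 := cardE i
    omega
  have hEE : ∀ i, (E i ∩ E (i+1)).card = 1 := by
    intro i
    exact two_subsets_card (card3 (i+1)) (EsubR i) (EsubL (i+1)) (cardE i) (cardE (i+1)) (hEne i)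
  have hex : ∀ i : Fin 5, ∃ x, E i ∩ E (i+1) = {x} := fun i => Finset.card_eq_one.mp (hEE i)
  choose c hc using hex
  have cmemL : ∀ i, c i ∈ E i := by
    intro i
    have : c i ∈ E i ∩ E (i+1) := by rw [hc i]; exact Finset.mem_singleton_self _
    exact (Finset.mem_inter.mp this).1
  have cmemR : ∀ i, c i ∈ E (i+1) := by
    intro i
    have : c i ∈ E i ∩ E (i+1) := by rw [hc i]; exact Finset.mem_singleton_self _
    exact (Finset.mem_inter.mp this).2
  have cuniq : ∀ i x, x ∈ E i → x ∈ E (i+1) → x = c i := by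
    intro i x h1 h2
    have : x ∈ E i ∩ E (i+1) := Finset.mem_inter.mpr ⟨h1, h2⟩
    rw [hc i] at this
    exact Finset.mem_singleton.mp this
  -- the collapse lemma
  have collapse : ∀ i, c i = c (i+1) → ∀ j, c j = c i := by
    intro i hcc
    have hv1 : c i ∈ E i := cmemL i
    have hv2 : c i ∈ E (i+1) := cmemR i
    have hv3 : c i ∈ E (i+2) := by
      have := cmemR (i+1)
      rw [(harith i).1] at this
      rw [hcc]; exact this
    have hd : c i = c (i+3) := by
      by_contra hne
      have hsub : ({c i, c (i+3)} : Finset V) ⊆ T i ∩ T (i+3) := by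
        intro x hx
        rcases Finset.mem_insert.mp hx with rfl | hx
        · refine Finset.mem_inter.mpr ⟨EsubL i hv1, ?_⟩
          have := EsubR (i+2) hv3
          rwa [(harith i).2.1] at this
        · rw [Finset.mem_singleton.mp hx]
          have m1 : c (i+3) ∈ E (i+4) := by
            have := cmemR (i+3); rwa [(harith i).2.2.1] at this
          have m2 : c (i+3) ∈ T i := by
            have := EsubR (i+4) m1; rwa [(harith i).2.2.2] at this
          exact Finset.mem_inter.mpr ⟨m2, EsubL (i+3) (cmemL (i+3))⟩
      have hcard2 : ({c i, c (i+3)} : Finset V).card = 2 := Finset.card_pair hne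
      have hle := Finset.card_le_card hsub
      have h1 := hnadj i (i+3) (dna3 i).1 (dna3 i).2
      omega
    have hall : ∀ j, c i ∈ E j := by
      intro j
      rcases dall i j with rfl | rfl | rfl | rfl | rfl
      · exact hv1
      · exact hv2
      · exact hv3
      · rw [hd]; exact cmemL (i+3)
      · have := cmemR (i+3)
        rw [(harith i).2.2.1] at this
        rw [hd]; exact this
    intro j
    exact (cuniq j (c i) (hall j) (hall (j+1))).symm
  -- main case split
  by_cases hhub : ∀ j, c j = c 0
  · -- wheel case
    left
    set hub : V := c 0 with hhubdef
    have hubmem : ∀ j, hub ∈ E j := by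
      intro j
      have := cmemL j
      rwa [hhub j] at this
    have aex : ∀ j : Fin 5, ∃ x, (E j).erase hub = {x} := by
      intro j
      apply Finset.card_eq_one.mp
      rw [Finset.card_erase_of_mem (hubmem j), cardE]
    choose a ha using aex
    have amem : ∀ j, a j ∈ E j := by
      intro j
      apply Finset.mem_of_mem_erase (s := E j) (a := hub)
      rw [ha j]; exact Finset.mem_singleton_self _
    have anehub : ∀ j, a j ≠ hub := by
      intro j
      apply Finset.ne_of_mem_erase (s := E j)
      rw [ha j]; exact Finset.mem_singleton_self _
    have key : ∀ (k : Fin 5) (x : V), x ∈ E k → x ∈ E (k+1) → x ≠ hub → False := by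
      intro k x h1 h2 hxh
      exact hxh (by rw [cuniq k x h1 h2, hhub k])
    have pairT : ∀ (p q : Fin 5) (x : V), p ≠ q → ¬(cycleGraph 5).Adj p q → x ≠ hub →
        x ∈ T p → x ∈ T q → False := by
      intro p q x hpq hna hxh m1 m2
      have hsub : ({hub, x} : Finset V) ⊆ T p ∩ T q := by
        intro y hy
        rcases Finset.mem_insert.mp hy with rfl | hy
        · exact Finset.mem_inter.mpr ⟨EsubL p (hubmem p), EsubL q (hubmem q)⟩
        · rw [Finset.mem_singleton.mp hy]
          exact Finset.mem_inter.mpr ⟨m1, m2⟩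
      have hcard2 : ({hub, x} : Finset V).card = 2 := Finset.card_pair (Ne.symm hxh)
      have hle := Finset.card_le_card hsub
      have h1 := hnadj p q hpq hna
      omega
    have adist : ∀ i j : Fin 5, i ≠ j → a i ≠ a j := by
      intro i j hij heq
      rcases dsplitW i j hij with rfl | rfl | rfl | rfl
      · exact key i (a i) (amem i) (by rw [heq]; exact amem (i+1)) (anehub i)
      · exact key j (a j) (amem j) (by rw [← heq]; exact amem (j+1)) (anehub j)
      · exact pairT i (i+2) (a i) (dna2 i).1 (dna2 i).2 (anehub i) (EsubL i (amem i))
          (by rw [heq]; exact EsubL (i+2) (amem (i+2)))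
      · exact pairT (i+1) (i+3) (a i) (dna13 i).1 (dna13 i).2 (anehub i) (EsubR i (amem i))
          (by rw [heq]; exact EsubL (i+3) (amem (i+3)))
    have hAdjH : ∀ x : Fin 5, G.Adj hub (a x) := fun x =>
      (tri x).2 hub (EsubL x (hubmem x)) (a x) (EsubL x (amem x)) (Ne.symm (anehub x))
    have hAdjA : ∀ x : Fin 5, G.Adj (a x) (a (x+1)) := fun x =>
      (tri (x+1)).2 (a x) (EsubR x (amem x)) (a (x+1)) (EsubL (x+1) (amem (x+1)))
        (adist x (x+1) (dne1 x))
    refine ⟨⟨fun o => o.elim hub a, ?_⟩, ?_⟩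
    · intro u v huv
      simp only [wheel, SimpleGraph.fromRel_adj] at huv
      obtain ⟨hne, h | h⟩ := huv
      · rcases h with rfl | ⟨x, y, rfl, rfl, hxy⟩
        · match v, hne with
          | some b, _ => exact hAdjH b
          | none, hne => exact absurd rfl hne
        · rcases dsucc x y hxy with rfl | rfl
          · exact hAdjA x
          · exact (hAdjA y).symm
      · rcases h with rfl | ⟨x, y, rfl, rfl, hxy⟩
        · match u, hne with
          | some b, _ => exact (hAdjH b).symm
          | none, hne => exact absurd rfl hne
        · rcases dsucc x y hxy with rfl | rfl
          · exact (hAdjA x).symm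
          · exact hAdjA y
    · intro o1 o2 h
      match o1, o2, h with
      | none, none, _ => rfl
      | none, some b, h => exact absurd (Eq.symm h) (anehub b)
      | some b, none, h => exact absurd h (anehub b)
      | some b1, some b2, h =>
        congr 1
        by_contra hab
        exact adist b1 b2 hab h
  · -- K5 case
    right
    push_neg at hhub
    obtain ⟨j0, hj0⟩ := hhub
    have hne1 : ∀ i, c i ≠ c (i+1) := by
      intro i h
      exact hj0 ((collapse i h j0).trans (collapse i h 0).symm)
    have hne2 : ∀ i, c i ≠ c (i+2) := by
      intro i h
      apply hne1 i
      have m2 : c i ∈ E (i+1+1) := by rw [(harith i).1, h]; exact cmemL (i+2)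
      exact cuniq (i+1) (c i) (cmemR i) m2
    have cdist : ∀ i j : Fin 5, i ≠ j → c i ≠ c j := by
      intro i j hij
      rcases dsplitK i j hij with rfl | rfl | rfl | rfl
      · exact hne1 i
      · exact (hne1 j).symm
      · exact hne2 i
      · exact (hne2 j).symm
    have hA1 : ∀ i, G.Adj (c i) (c (i+1)) := fun i =>
      (tri (i+1)).2 (c i) (EsubL (i+1) (cmemR i)) (c (i+1)) (EsubL (i+1) (cmemL (i+1))) (hne1 i)
    have hA2 : ∀ i, G.Adj (c i) (c (i+2)) := by
      intro i
      have m1 : c i ∈ T (i+2) := by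
        have := EsubR (i+1) (cmemR i); rwa [(harith i).1] at this
      exact (tri (i+2)).2 (c i) m1 (c (i+2)) (EsubL (i+2) (cmemL (i+2))) (hne2 i)
    have cadj : ∀ u v : Fin 5, u ≠ v → G.Adj (c u) (c v) := by
      intro u v huv
      rcases dsplitK u v huv with rfl | rfl | rfl | rfl
      · exact hA1 u
      · exact (hA1 v).symm
      · exact hA2 u
      · exact (hA2 v).symm
    refine ⟨⟨c, ?_⟩, ?_⟩
    · intro u v huv
      exact cadj u v huv
    · intro u v h
      by_contra hne
      exact cdist u v hne h

/-- `T(G)` contains an induced 5-cycle iff `G` contains a subgraph isomorphic to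
the wheel `W₅` or to `K₅`. -/
theorem triangleGraph_C5_iff {V : Type*} [Fintype V] [DecidableEq V]
    (G : SimpleGraph V) :
    Nonempty (cycleGraph 5 ↪g triangleGraph G) ↔
      HasSubgraphIso (wheel 5) G ∨ HasSubgraphIso (completeGraph (Fin 5)) G := by
  constructor
  · rintro ⟨φ⟩
    exact forward_case φ
  · rintro (h | h)
    · exact wheel_case h
    · exact k5_case h
end
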